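/- arXiv:math/0609827 — 5 statements merged into one kernel-verified Lean document; each statement's English description precedes it below -/
import Mathlib

section
/- Let v : ℝ² → ℝ² be a unit Lipschitz vector field with constant K, 0 < T < 1/K, and 1 ≤ p < ∞. Then for every F ∈ L^p(ℝ²), the averages M_t(F)(X) = (1/(2t))∫_{−t}^{t} F(X + s·v(X)) ds converge to F in L^p norm as t → 0. -/
open MeasureTheory Real Filter
local notation "E2" => EuclideanSpace ℝ (Fin 2)

lemma vol_image_le {L : NNReal} {f : E2 → E2} {s : Set E2} (hf : LipschitzOnWith L f s) :
    volume (f '' s) ≤ (L : ENNReal) ^ (2:ℝ) * volume s := by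
  have hfr : (Module.finrank ℝ E2 : ℝ) = (2:ℝ) := by
    rw [finrank_euclideanSpace_fin]; norm_num
  have hH : (μH[(2:ℝ)] : Measure E2).IsAddHaarMeasure := by
    rw [← hfr]; exact isAddHaarMeasure_hausdorffMeasure
  have hvol : (volume : Measure E2)
      = (volume : Measure E2).addHaarScalarFactor μH[(2:ℝ)] • μH[(2:ℝ)] :=
    Measure.isAddLeftInvariant_eq_smul _ _
  set c := (volume : Measure E2).addHaarScalarFactor μH[(2:ℝ)]
  have him := hf.hausdorffMeasure_image_le (by norm_num : (0:ℝ) ≤ 2)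
  calc volume (f '' s) = c • μH[(2:ℝ)] (f '' s) := by rw [hvol]; rfl
    _ ≤ c • ((L : ENNReal) ^ (2:ℝ) * μH[(2:ℝ)] s) := by
        exact smul_le_smul_of_nonneg_left him zero_le
    _ = (L : ENNReal) ^ (2:ℝ) * (c • μH[(2:ℝ)] s) := by
        simp [smul_eq_mul, ENNReal.smul_def]; ring
    _ = (L : ENNReal) ^ (2:ℝ) * volume s := by rw [hvol]; rfl

lemma vol_preimage_le (v : E2 → E2) (K : ℝ)
    (hlip : ∀ X Y, ‖v X - v Y‖ ≤ K * ‖X - Y‖)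
    (s : ℝ) (a : ℝ) (ha : 0 < a) (hs : |s| * K ≤ 1 - a) (A : Set E2) :
    volume ((fun X => X + s • v X) ⁻¹' A)
      ≤ ((a⁻¹).toNNReal : ENNReal) ^ (2:ℝ) * volume A := by
  set Φ : E2 → E2 := fun X => X + s • v X with hΦ
  have key : ∀ x y : E2, a * ‖x - y‖ ≤ ‖Φ x - Φ y‖ := by
    intro x y
    have h1 : ‖Φ x - Φ y‖ ≥ ‖x - y‖ - ‖s • (v x - v y)‖ := by
      have : Φ x - Φ y = (x - y) + s • (v x - v y) := by
        simp [hΦ, smul_sub]; abel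
      rw [this]
      have := norm_sub_norm_le (x - y) (-(s • (v x - v y)))
      simp only [sub_neg_eq_add, norm_neg] at this
      linarith [this]
    have h2 : ‖s • (v x - v y)‖ ≤ |s| * K * ‖x - y‖ := by
      rw [norm_smul, Real.norm_eq_abs, mul_assoc]
      exact mul_le_mul_of_nonneg_left (hlip x y) (abs_nonneg s)
    have h3 : |s| * K * ‖x - y‖ ≤ (1 - a) * ‖x - y‖ :=
      mul_le_mul_of_nonneg_right hs (norm_nonneg _)
    nlinarith [norm_nonneg (x - y)]
  have hinj : Function.Injective Φ := by
    intro x y hxy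
    have := key x y
    rw [hxy, sub_self, norm_zero] at this
    have hle : ‖x - y‖ ≤ 0 := by nlinarith [norm_nonneg (x - y)]
    have hz : x - y = 0 := norm_eq_zero.mp (le_antisymm hle (norm_nonneg _))
    simpa [sub_eq_zero] using hz
  set g : E2 → E2 := Function.invFun Φ with hg
  have hgl : Function.LeftInverse g Φ := Function.leftInverse_invFun hinj
  have hglip : LipschitzOnWith (a⁻¹).toNNReal g (Φ '' (Φ ⁻¹' A)) := by
    apply LipschitzOnWith.of_dist_le_mul
    rintro u ⟨x, hx, rfl⟩ w ⟨y, hy, rfl⟩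
    rw [hgl x, hgl y]
    rw [Real.coe_toNNReal _ (by positivity)]
    rw [dist_eq_norm, dist_eq_norm]
    calc ‖x - y‖ = a⁻¹ * (a * ‖x - y‖) := by field_simp
      _ ≤ a⁻¹ * ‖Φ x - Φ y‖ := by
          apply mul_le_mul_of_nonneg_left (key x y) (by positivity)
  have himg : g '' (Φ '' (Φ ⁻¹' A)) = Φ ⁻¹' A := by
    rw [Set.image_image]
    simp only [hgl _]
    exact Set.image_id _
  calc volume (Φ ⁻¹' A) = volume (g '' (Φ '' (Φ ⁻¹' A))) := by rw [himg]
    _ ≤ ((a⁻¹).toNNReal : ENNReal) ^ (2:ℝ) * volume (Φ '' (Φ ⁻¹' A)) := vol_image_le hglip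
    _ ≤ ((a⁻¹).toNNReal : ENNReal) ^ (2:ℝ) * volume A := by
        gcongr
        exact Set.image_preimage_subset _ _

lemma Mt_bound (v : E2 → E2) (hv : Continuous v) (T : ℝ) (hT0 : 0 < T)
    (C : ENNReal)
    (hC : ∀ s : ℝ, |s| ≤ T → ∀ A : Set E2,
      volume ((fun X => X + s • v X) ⁻¹' A) ≤ C * volume A)
    (p : ℝ) (hp : 1 ≤ p)
    (H : E2 → ℝ) (hH : StronglyMeasurable H)
    (t : ℝ) (ht0 : 0 < t) (htT : t ≤ T) :
    eLpNorm (fun X => (1 / (2 * t)) * ∫ s in (-t)..t, H (X + s • v X))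
        (ENNReal.ofReal p) volume
      ≤ C ^ (1/p) * eLpNorm H (ENNReal.ofReal p) volume := by
  have hp0 : (0:ℝ) < p := lt_of_lt_of_le one_pos hp
  set q : ENNReal := ENNReal.ofReal p with hq
  have hq0 : q ≠ 0 := by simp [hq, ENNReal.ofReal_eq_zero]; linarith
  have hqtop : q ≠ ⊤ := ENNReal.ofReal_ne_top
  have hqr : q.toReal = p := ENNReal.toReal_ofReal hp0.le
  -- the averaging probability measure
  set ν : Measure ℝ := ((ENNReal.ofReal (2*t))⁻¹) • (volume.restrict (Set.Ioc (-t) t)) with hν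
  have h2t : (0:ℝ) < 2 * t := by linarith
  have hνuniv : ν Set.univ = 1 := by
    rw [hν, Measure.smul_apply, Measure.restrict_apply MeasurableSet.univ,
      Set.univ_inter, Real.volume_Ioc, smul_eq_mul]
    rw [show t - (-t) = 2*t by ring]
    exact ENNReal.inv_mul_cancel (by simp [ENNReal.ofReal_eq_zero]; linarith)
      ENNReal.ofReal_ne_top
  have hνprob : IsProbabilityMeasure ν := ⟨hνuniv⟩
  have hΦcont : Continuous (fun P : E2 × ℝ => P.1 + P.2 • v P.1) :=
    continuous_fst.add (continuous_snd.smul (hv.comp continuous_fst))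
  have hΦmeas : ∀ s : ℝ, Measurable (fun X : E2 => X + s • v X) := by
    intro s
    exact (continuous_id.add ((continuous_const (y := s)).smul hv)).measurable
  -- pointwise Jensen
  have hpt : ∀ X : E2,
      (‖(1 / (2 * t)) * ∫ s in (-t)..t, H (X + s • v X)‖₊ : ENNReal) ^ p
        ≤ ∫⁻ s, (‖H (X + s • v X)‖₊ : ENNReal) ^ p ∂ν := by
    intro X
    have heq : (1 / (2 * t)) * ∫ s in (-t)..t, H (X + s • v X)
        = ∫ s, H (X + s • v X) ∂ν := by
      rw [hν, integral_smul_measure, ENNReal.toReal_inv, ENNReal.toReal_ofReal h2t.le,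
        intervalIntegral.integral_of_le (by linarith : -t ≤ t)]
      simp [smul_eq_mul, one_div]
    rw [heq]
    have hf_aesm : AEStronglyMeasurable (fun s => H (X + s • v X)) ν :=
      (hH.comp_measurable ((hΦcont.comp (Continuous.prodMk_right X)).measurable)).aestronglyMeasurable
    have h1 : (‖∫ s, H (X + s • v X) ∂ν‖₊ : ENNReal)
        ≤ eLpNorm (fun s => H (X + s • v X)) 1 ν := by
      rw [eLpNorm_one_eq_lintegral_enorm]
      exact enorm_integral_le_lintegral_enorm _
    have h2 : eLpNorm (fun s => H (X + s • v X)) 1 ν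
        ≤ eLpNorm (fun s => H (X + s • v X)) q ν :=
      eLpNorm_le_eLpNorm_of_exponent_le (by simpa [hq] using ENNReal.one_le_ofReal.2 hp) hf_aesm
    have h3 : eLpNorm (fun s => H (X + s • v X)) q ν
        = (∫⁻ s, (‖H (X + s • v X)‖₊ : ENNReal) ^ p ∂ν) ^ (1/p) := by
      rw [eLpNorm_eq_lintegral_rpow_enorm_toReal hq0 hqtop, hqr]
      simp only [enorm_eq_nnnorm]
    calc (‖∫ s, H (X + s • v X) ∂ν‖₊ : ENNReal) ^ p
        ≤ ((∫⁻ s, (‖H (X + s • v X)‖₊ : ENNReal) ^ p ∂ν) ^ (1/p)) ^ p := by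
          gcongr
          exact h1.trans (h2.trans_eq h3)
      _ = ∫⁻ s, (‖H (X + s • v X)‖₊ : ENNReal) ^ p ∂ν := by
          rw [← ENNReal.rpow_mul, one_div, inv_mul_cancel₀ hp0.ne', ENNReal.rpow_one]
  -- measure-comparison bound for each fixed s
  have hslice : ∀ s : ℝ, |s| ≤ T →
      ∫⁻ X, (‖H (X + s • v X)‖₊ : ENNReal) ^ p ∂(volume : Measure E2)
        ≤ C * ∫⁻ X, (‖H X‖₊ : ENNReal) ^ p ∂(volume : Measure E2) := by
    intro s hs
    have hG : Measurable fun y : E2 => (‖H y‖₊ : ENNReal) ^ p :=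
      (hH.measurable.nnnorm.coe_nnreal_ennreal).pow_const p
    have hmaple : Measure.map (fun X : E2 => X + s • v X) volume ≤ C • volume := by
      rw [Measure.le_iff]
      intro A hA
      rw [Measure.map_apply (hΦmeas s) hA, Measure.smul_apply, smul_eq_mul]
      exact hC s hs A
    calc ∫⁻ X, (‖H (X + s • v X)‖₊ : ENNReal) ^ p ∂volume
        = ∫⁻ y, (‖H y‖₊ : ENNReal) ^ p ∂(Measure.map (fun X : E2 => X + s • v X) volume) :=
          (lintegral_map hG (hΦmeas s)).symm
      _ ≤ ∫⁻ y, (‖H y‖₊ : ENNReal) ^ p ∂(C • volume) := lintegral_mono' hmaple le_rfl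
      _ = C * ∫⁻ X, (‖H X‖₊ : ENNReal) ^ p ∂volume := lintegral_smul_measure _ _
  -- assemble
  have hswap : ∫⁻ X, (∫⁻ s, (‖H (X + s • v X)‖₊ : ENNReal) ^ p ∂ν) ∂(volume : Measure E2)
      = ∫⁻ s, (∫⁻ X, (‖H (X + s • v X)‖₊ : ENNReal) ^ p ∂(volume : Measure E2)) ∂ν := by
    apply lintegral_lintegral_swap
    apply Measurable.aemeasurable
    exact ((hH.measurable.comp hΦcont.measurable).nnnorm.coe_nnreal_ennreal).pow_const p
  have hmain : ∫⁻ X, (‖(1 / (2 * t)) * ∫ s in (-t)..t, H (X + s • v X)‖₊ : ENNReal) ^ p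
        ∂(volume : Measure E2)
      ≤ C * ∫⁻ X, (‖H X‖₊ : ENNReal) ^ p ∂(volume : Measure E2) := by
    calc ∫⁻ X, (‖(1 / (2 * t)) * ∫ s in (-t)..t, H (X + s • v X)‖₊ : ENNReal) ^ p ∂volume
        ≤ ∫⁻ X, (∫⁻ s, (‖H (X + s • v X)‖₊ : ENNReal) ^ p ∂ν) ∂volume :=
          lintegral_mono hpt
      _ = ∫⁻ s, (∫⁻ X, (‖H (X + s • v X)‖₊ : ENNReal) ^ p ∂volume) ∂ν := hswap
      _ ≤ ∫⁻ _, (C * ∫⁻ X, (‖H X‖₊ : ENNReal) ^ p ∂volume) ∂ν := by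
          apply lintegral_mono_ae
          have hae : ∀ᵐ s ∂ν, s ∈ Set.Ioc (-t) t := by
            rw [hν]
            exact Measure.ae_smul_measure (ae_restrict_mem measurableSet_Ioc) _
          filter_upwards [hae] with s hs
          exact hslice s (abs_le.2 ⟨by linarith [hs.1], le_trans hs.2 htT⟩)
      _ = C * ∫⁻ X, (‖H X‖₊ : ENNReal) ^ p ∂volume := by
          rw [lintegral_const, hνuniv, mul_one]
  rw [eLpNorm_eq_lintegral_rpow_enorm_toReal hq0 hqtop, eLpNorm_eq_lintegral_rpow_enorm_toReal hq0 hqtop, hqr]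
  simp only [enorm_eq_nnnorm]
  calc (∫⁻ X, (‖(1 / (2 * t)) * ∫ s in (-t)..t, H (X + s • v X)‖₊ : ENNReal) ^ p ∂volume) ^ (1/p)
      ≤ (C * ∫⁻ X, (‖H X‖₊ : ENNReal) ^ p ∂volume) ^ (1/p) := by gcongr
    _ = C ^ (1/p) * (∫⁻ X, (‖H X‖₊ : ENNReal) ^ p ∂volume) ^ (1/p) :=
        ENNReal.mul_rpow_of_nonneg _ _ (by positivity)

lemma Mt_cc (v : E2 → E2) (hv : Continuous v) (hunit : ∀ X, ‖v X‖ = 1)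
    (T : ℝ) (hT0 : 0 < T) (p : ℝ) (hp : 1 ≤ p)
    (g : E2 → ℝ) (hgc : Continuous g) (hgs : HasCompactSupport g) :
    Tendsto (fun t : ℝ => eLpNorm
        (fun X => ((1 / (2 * t)) * ∫ s in (-t)..t, g (X + s • v X)) - g X)
        (ENNReal.ofReal p) volume)
      (nhdsWithin 0 (Set.Ioo 0 T)) (nhds 0) := by
  have hp0 : (0:ℝ) < p := lt_of_lt_of_le one_pos hp
  set q : ENNReal := ENNReal.ofReal p with hq
  have hq0 : q ≠ 0 := by simp [hq, ENNReal.ofReal_eq_zero]; linarith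
  have hqtop : q ≠ ⊤ := ENNReal.ofReal_ne_top
  have hqr : q.toReal = p := ENNReal.toReal_ofReal hp0.le
  set Kset : Set E2 := Metric.cthickening T (tsupport g) with hKset
  have hKcomp : IsCompact Kset := hgs.cthickening
  have hKmeas : MeasurableSet Kset := hKcomp.isClosed.measurableSet
  have hKfin : volume Kset < ⊤ := hKcomp.measure_lt_top
  set B : ENNReal := volume Kset ^ (1/p) + 1 with hB
  have hB0 : B ≠ 0 := by simp [hB]
  have hBtop : B ≠ ⊤ := by
    rw [hB]
    exact ENNReal.add_ne_top.2
      ⟨(ENNReal.rpow_lt_top_of_nonneg (by positivity) hKfin.ne).ne, ENNReal.one_ne_top⟩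
  rw [ENNReal.tendsto_nhds_zero]
  intro ε hε
  set ε₁ : ENNReal := min ε 1 with hε₁
  have hε₁0 : ε₁ ≠ 0 := by
    simp only [hε₁, ne_eq, min_eq_iff, not_or]
    constructor <;> rintro ⟨h1, -⟩
    · exact hε.ne' h1
    · exact one_ne_zero h1
  have hε₁top : ε₁ ≠ ⊤ := by simp [hε₁]
  set εR : ℝ := (ε₁ / B).toReal with hεR
  have hdiv0 : ε₁ / B ≠ 0 := by
    simp only [ne_eq, ENNReal.div_eq_zero_iff, not_or]
    exact ⟨hε₁0, hBtop⟩
  have hdivtop : ε₁ / B ≠ ⊤ := by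
    simp [ENNReal.div_eq_top, hε₁top, hB0]
  have hεR0 : 0 < εR := ENNReal.toReal_pos hdiv0 hdivtop
  have hgu : UniformContinuous g := hgs.uniformContinuous_of_continuous hgc
  rw [Metric.uniformContinuous_iff] at hgu
  obtain ⟨δ, hδ0, hδ⟩ := hgu εR hεR0
  have hev : ∀ᶠ t in nhdsWithin (0:ℝ) (Set.Ioo 0 T), t < δ ∧ t ∈ Set.Ioo 0 T := by
    refine Eventually.and ?_ self_mem_nhdsWithin
    refine eventually_of_mem (mem_nhdsWithin_of_mem_nhds (Iio_mem_nhds hδ0)) ?_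
    intro x hx; exact hx
  filter_upwards [hev] with t ht
  have htδ := ht.1
  have ht0 := ht.2.1
  have htT := ht.2.2
  have h2t : (0:ℝ) < 2 * t := by linarith
  have hdistX : ∀ (X : E2) (s : ℝ), dist (X + s • v X) X = |s| := by
    intro X s
    rw [dist_eq_norm]
    have : X + s • v X - X = s • v X := by abel
    rw [this, norm_smul, hunit X, Real.norm_eq_abs, mul_one]
  have hbound : ∀ X : E2,
      ‖((1 / (2 * t)) * ∫ s in (-t)..t, g (X + s • v X)) - g X‖
        ≤ ‖Kset.indicator (fun _ => εR) X‖ := by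
    intro X
    by_cases hXK : X ∈ Kset
    · rw [Set.indicator_of_mem hXK, Real.norm_of_nonneg hεR0.le]
      have hInt : IntervalIntegrable (fun s => g (X + s • v X)) volume (-t) t :=
        (hgc.comp ((continuous_const.add (continuous_id.smul continuous_const)))).intervalIntegrable _ _
      have hsplit : ((1 / (2 * t)) * ∫ s in (-t)..t, g (X + s • v X)) - g X
          = (1 / (2 * t)) * ∫ s in (-t)..t, (g (X + s • v X) - g X) := by
        rw [intervalIntegral.integral_sub hInt (intervalIntegrable_const),
          intervalIntegral.integral_const]
        rw [mul_sub]
        congr 1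
        rw [show t - (-t) = 2 * t by ring, smul_eq_mul, ← mul_assoc]
        field_simp
      rw [hsplit, norm_mul, Real.norm_eq_abs (1 / (2*t)), abs_of_pos (by positivity)]
      have hIb : ‖∫ s in (-t)..t, (g (X + s • v X) - g X)‖ ≤ εR * |t - (-t)| := by
        apply intervalIntegral.norm_integral_le_of_norm_le_const
        intro s hs
        rw [Set.uIoc_of_le (by linarith : -t ≤ t)] at hs
        have habs : |s| ≤ t := abs_le.2 ⟨le_of_lt hs.1, hs.2⟩
        have : dist (X + s • v X) X < δ := by
          rw [hdistX]; linarith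
        have := hδ this
        rw [Real.dist_eq] at this
        exact le_of_lt this
      calc (1 / (2*t)) * ‖∫ s in (-t)..t, (g (X + s • v X) - g X)‖
          ≤ (1 / (2*t)) * (εR * |t - (-t)|) := by
            apply mul_le_mul_of_nonneg_left hIb (by positivity)
        _ = εR := by
            rw [show t - (-t) = 2*t by ring, abs_of_pos h2t]
            field_simp
    · have hgX : g X = 0 := by
        apply image_eq_zero_of_notMem_tsupport
        intro hmem
        exact hXK (Metric.self_subset_cthickening _ hmem)
      have hgΦ : ∀ s ∈ Set.uIcc (-t) t, g (X + s • v X) = 0 := by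
        intro s hs
        apply image_eq_zero_of_notMem_tsupport
        intro hmem
        apply hXK
        apply Metric.mem_cthickening_of_dist_le X (X + s • v X) T _ hmem
        rw [dist_comm, hdistX]
        rw [Set.uIcc_of_le (by linarith : -t ≤ t)] at hs
        have : |s| ≤ t := abs_le.2 ⟨hs.1, hs.2⟩
        linarith
      have : (∫ s in (-t)..t, g (X + s • v X)) = 0 := by
        rw [intervalIntegral.integral_congr (g := fun _ => (0:ℝ)) hgΦ]
        simp
      rw [this, hgX, mul_zero, sub_zero, norm_zero]
      exact norm_nonneg _
  calc eLpNorm (fun X => ((1 / (2 * t)) * ∫ s in (-t)..t, g (X + s • v X)) - g X) q volume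
      ≤ eLpNorm (Kset.indicator (fun _ => εR)) q volume := eLpNorm_mono hbound
    _ = ‖εR‖₊ * volume Kset ^ (1 / q.toReal) := eLpNorm_indicator_const hKmeas hq0 hqtop
    _ = (ε₁ / B) * volume Kset ^ (1/p) := by
        rw [hqr]
        congr 1
        rw [← ENNReal.ofReal_toReal hdivtop, ← hεR]
        exact Real.enorm_eq_ofReal hεR0.le
    _ ≤ (ε₁ / B) * B := by
        gcongr
        rw [hB]; exact le_self_add
    _ = ε₁ := ENNReal.div_mul_cancel hB0 hBtop
    _ ≤ ε := min_le_left _ _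

lemma Mt_meas (v : E2 → E2) (hv : Continuous v)
    (H : E2 → ℝ) (hH : StronglyMeasurable H) (t : ℝ) (ht : 0 < t) :
    StronglyMeasurable fun X : E2 => ∫ s in (-t)..t, H (X + s • v X) := by
  have hΦcont : Continuous (fun P : E2 × ℝ => P.1 + P.2 • v P.1) :=
    continuous_fst.add (continuous_snd.smul (hv.comp continuous_fst))
  have heq : (fun X : E2 => ∫ s in (-t)..t, H (X + s • v X))
      = fun X => ∫ s, H (X + s • v X) ∂(volume.restrict (Set.Ioc (-t) t)) := by
    funext X
    rw [intervalIntegral.integral_of_le (by linarith : -t ≤ t)]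
  rw [heq]
  exact StronglyMeasurable.integral_prod_right
    (hH.comp_measurable hΦcont.measurable)

theorem zygmund_Lp_norm_convergence
    (v : EuclideanSpace ℝ (Fin 2) → EuclideanSpace ℝ (Fin 2)) (K T : ℝ)
    (hK : 0 < K) (hlip : ∀ X Y, ‖v X - v Y‖ ≤ K * ‖X - Y‖)
    (hunit : ∀ X, ‖v X‖ = 1) (hT0 : 0 < T) (hT : T < 1 / K)
    (p : ℝ) (hp : 1 ≤ p)
    (F : EuclideanSpace ℝ (Fin 2) → ℝ) (hF : MemLp F (ENNReal.ofReal p) volume) :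
    Tendsto
      (fun t : ℝ => eLpNorm
        (fun X => ((1 / (2 * t)) * ∫ s in (-t)..t, F (X + s • v X)) - F X)
        (ENNReal.ofReal p) volume)
      (nhdsWithin 0 (Set.Ioo 0 T)) (nhds 0) := by
  have hp0 : (0:ℝ) < p := lt_of_lt_of_le one_pos hp
  set q : ENNReal := ENNReal.ofReal p with hq
  have hq0 : q ≠ 0 := by simp [hq, ENNReal.ofReal_eq_zero]; linarith
  have hqtop : q ≠ ⊤ := ENNReal.ofReal_ne_top
  have hqr : q.toReal = p := ENNReal.toReal_ofReal hp0.le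
  have hq1 : 1 ≤ q := by rw [hq]; exact ENNReal.one_le_ofReal.2 hp
  -- continuity of v
  have hv : Continuous v := by
    have hL : LipschitzWith (Real.toNNReal K) v := by
      apply LipschitzWith.of_dist_le_mul
      intro x y
      rw [dist_eq_norm, dist_eq_norm, Real.coe_toNNReal K hK.le]
      exact hlip x y
    exact hL.continuous
  have hΦcont : Continuous (fun P : E2 × ℝ => P.1 + P.2 • v P.1) :=
    continuous_fst.add (continuous_snd.smul (hv.comp continuous_fst))
  -- the uniform constant
  set a : ℝ := 1 - T * K with ha'
  have haK : 0 < a := by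
    have := (lt_div_iff₀ hK).mp hT
    simp only [ha']; linarith
  set C : ENNReal := ((a⁻¹).toNNReal : ENNReal) ^ (2:ℝ) with hCdef
  have hC : ∀ s : ℝ, |s| ≤ T → ∀ A : Set E2,
      volume ((fun X => X + s • v X) ⁻¹' A) ≤ C * volume A := by
    intro s hs A
    apply vol_preimage_le v K hlip s a haK _ A
    have h1 : |s| * K ≤ T * K := mul_le_mul_of_nonneg_right hs hK.le
    simp only [ha']; linarith
  have hCtop : C ≠ ⊤ := ENNReal.rpow_ne_top_of_nonneg (by norm_num) ENNReal.coe_ne_top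
  set C' : ENNReal := C ^ (1/p) with hC'def
  have hC'top : C' ≠ ⊤ := ENNReal.rpow_ne_top_of_nonneg (by positivity) hCtop
  -- measurable representative
  have hsm : AEStronglyMeasurable F volume := hF.1
  set F' : E2 → ℝ := hsm.mk F with hF'def
  have hF'sm : StronglyMeasurable F' := hsm.stronglyMeasurable_mk
  have hFF' : F =ᵐ[volume] F' := hsm.ae_eq_mk
  have hF'mem : MemLp F' q volume :=
    ⟨hF'sm.aestronglyMeasurable, by rw [← eLpNorm_congr_ae hFF']; exact hF.2⟩
  obtain ⟨N, hNsub, hNmeas, hN0⟩ :=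
    exists_measurable_superset_of_null (ae_iff.mp hFF')
  set lamT : Measure ℝ := volume.restrict (Set.Ioc (-T) T) with hlamT
  -- the product null set argument
  set S : Set (E2 × ℝ) := (fun P : E2 × ℝ => P.1 + P.2 • v P.1) ⁻¹' N with hSdef
  have hSmeas : MeasurableSet S := hΦcont.measurable hNmeas
  have hsect : ∀ s : ℝ, |s| ≤ T →
      volume ((fun X : E2 => X + s • v X) ⁻¹' N) = 0 := by
    intro s hs
    refine le_antisymm ?_ zero_le
    calc volume ((fun X : E2 => X + s • v X) ⁻¹' N) ≤ C * volume N := hC s hs N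
      _ = 0 := by rw [hN0, mul_zero]
  have hprod : (volume.prod lamT) S = 0 := by
    have h1 : (volume.prod lamT) S = (lamT.prod volume) (Prod.swap ⁻¹' S) := by
      rw [← Measure.prod_swap, Measure.map_apply measurable_swap hSmeas]
    rw [h1, Measure.prod_apply (measurable_swap hSmeas)]
    have h2 : ∀ᵐ s ∂lamT, volume (Prod.mk s ⁻¹' (Prod.swap ⁻¹' S)) = 0 := by
      rw [hlamT]
      filter_upwards [ae_restrict_mem measurableSet_Ioc] with s hs
      have habs : |s| ≤ T := abs_le.2 ⟨by linarith [hs.1], hs.2⟩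
      have h3 : (Prod.mk s ⁻¹' (Prod.swap ⁻¹' S)) = (fun X : E2 => X + s • v X) ⁻¹' N := rfl
      rw [h3]
      exact hsect s habs
    rw [lintegral_congr_ae h2, lintegral_zero]
  have hae1 : ∀ᵐ X ∂(volume : Measure E2), lamT {s : ℝ | X + s • v X ∈ N} = 0 := by
    have h4 := (Measure.measure_prod_null hSmeas).mp hprod
    filter_upwards [h4] with X hX
    have h5 : (Prod.mk X ⁻¹' S) = {s : ℝ | X + s • v X ∈ N} := rfl
    rw [← h5]
    exact hX
  have hae : ∀ᵐ X ∂(volume : Measure E2),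
      F X = F' X ∧ lamT {s : ℝ | X + s • v X ∈ N} = 0 := hFF'.and hae1
  -- congruence between F and F' expressions on Ioo 0 T
  have hcongr : ∀ t ∈ Set.Ioo (0:ℝ) T,
      (fun X => ((1 / (2 * t)) * ∫ s in (-t)..t, F (X + s • v X)) - F X)
        =ᵐ[volume]
      (fun X => ((1 / (2 * t)) * ∫ s in (-t)..t, F' (X + s • v X)) - F' X) := by
    intro t ht
    filter_upwards [hae] with X hX
    obtain ⟨hX1, hX2⟩ := hX
    have hmeas_s : MeasurableSet {s : ℝ | X + s • v X ∈ N} :=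
      (hΦcont.comp (Continuous.prodMk_right X)).measurable hNmeas
    have hnull : volume ({s : ℝ | X + s • v X ∈ N} ∩ Set.Ioc (-T) T) = 0 := by
      rw [hlamT, Measure.restrict_apply hmeas_s] at hX2
      exact hX2
    have hIeq : (∫ s in (-t)..t, F (X + s • v X)) = ∫ s in (-t)..t, F' (X + s • v X) := by
      apply intervalIntegral.integral_congr_ae
      rw [ae_iff]
      apply measure_mono_null _ hnull
      intro s hs
      simp only [Set.mem_setOf_eq, not_forall] at hs
      obtain ⟨hs1, hs2⟩ := hs
      constructor
      · exact hNsub (by simpa using hs2)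
      · rw [Set.uIoc_of_le (by linarith [ht.1] : -t ≤ t)] at hs1
        exact ⟨by linarith [hs1.1, ht.2], by linarith [hs1.2, ht.2]⟩
    rw [hIeq, hX1]
  -- reduce to F'
  have hred : ∀ᶠ t in nhdsWithin (0:ℝ) (Set.Ioo 0 T),
      eLpNorm (fun X => ((1 / (2 * t)) * ∫ s in (-t)..t, F' (X + s • v X)) - F' X) q volume
        = eLpNorm (fun X => ((1 / (2 * t)) * ∫ s in (-t)..t, F (X + s • v X)) - F X) q volume := by
    filter_upwards [self_mem_nhdsWithin] with t ht
    exact (eLpNorm_congr_ae (hcongr t ht)).symm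
  apply Tendsto.congr' hred
  -- finiteness of the p-integral of F'
  have hIF : ∫⁻ X, (‖F' X‖₊ : ENNReal) ^ p ∂(volume : Measure E2) < ⊤ := by
    have h2 := hF'mem.2
    rw [eLpNorm_eq_lintegral_rpow_enorm_toReal hq0 hqtop, hqr] at h2
    simp only [enorm_eq_nnnorm] at h2
    by_contra h
    push_neg at h
    rw [top_le_iff.mp h, ENNReal.top_rpow_of_pos (by positivity : (0:ℝ) < 1/p)] at h2
    exact (lt_irrefl _ h2).elim
  -- a.e. finiteness of slice integrals
  have hmeas_prod : Measurable (Function.uncurry fun (X : E2) (s : ℝ) =>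
      (‖F' (X + s • v X)‖₊ : ENNReal) ^ p) :=
    ((hF'sm.measurable.comp hΦcont.measurable).nnnorm.coe_nnreal_ennreal).pow_const p
  have hint : ∀ᵐ X ∂(volume : Measure E2),
      (∫⁻ s, (‖F' (X + s • v X)‖₊ : ENNReal) ^ p ∂lamT) < ⊤ := by
    apply ae_lt_top
    · exact Measurable.lintegral_prod_right hmeas_prod
    · have hswap : ∫⁻ X, (∫⁻ s, (‖F' (X + s • v X)‖₊ : ENNReal) ^ p ∂lamT) ∂(volume : Measure E2)
          = ∫⁻ s, (∫⁻ X, (‖F' (X + s • v X)‖₊ : ENNReal) ^ p ∂(volume : Measure E2)) ∂lamT :=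
        lintegral_lintegral_swap hmeas_prod.aemeasurable
      rw [hswap]
      have hb : ∫⁻ s, (∫⁻ X, (‖F' (X + s • v X)‖₊ : ENNReal) ^ p ∂(volume : Measure E2)) ∂lamT
          ≤ ∫⁻ _, (C * ∫⁻ X, (‖F' X‖₊ : ENNReal) ^ p ∂(volume : Measure E2)) ∂lamT := by
        apply lintegral_mono_ae
        rw [hlamT]
        filter_upwards [ae_restrict_mem measurableSet_Ioc] with s hs
        have habs : |s| ≤ T := abs_le.2 ⟨by linarith [hs.1], hs.2⟩
        have hG : Measurable fun y : E2 => (‖F' y‖₊ : ENNReal) ^ p :=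
          (hF'sm.measurable.nnnorm.coe_nnreal_ennreal).pow_const p
        have hΦmeas : Measurable (fun X : E2 => X + s • v X) :=
          (continuous_id.add ((continuous_const (y := s)).smul hv)).measurable
        have hmaple : Measure.map (fun X : E2 => X + s • v X) volume ≤ C • volume := by
          rw [Measure.le_iff]
          intro A hA
          rw [Measure.map_apply hΦmeas hA, Measure.smul_apply, smul_eq_mul]
          exact hC s habs A
        calc ∫⁻ X, (‖F' (X + s • v X)‖₊ : ENNReal) ^ p ∂volume
            = ∫⁻ y, (‖F' y‖₊ : ENNReal) ^ p ∂(Measure.map (fun X : E2 => X + s • v X) volume) :=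
              (lintegral_map hG hΦmeas).symm
          _ ≤ ∫⁻ y, (‖F' y‖₊ : ENNReal) ^ p ∂(C • volume) := lintegral_mono' hmaple le_rfl
          _ = C * ∫⁻ X, (‖F' X‖₊ : ENNReal) ^ p ∂volume := lintegral_smul_measure _ _
      refine (lt_of_le_of_lt hb ?_).ne
      rw [lintegral_const]
      apply ENNReal.mul_lt_top
      · exact ENNReal.mul_lt_top hCtop.lt_top hIF
      · rw [hlamT, Measure.restrict_apply MeasurableSet.univ, Set.univ_inter]
        exact lt_of_le_of_lt (le_of_eq (Real.volume_Ioc)) ENNReal.ofReal_lt_top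
  -- main ε argument
  rw [ENNReal.tendsto_nhds_zero]
  intro ε hε
  set ε₁ : ENNReal := min ε 1 with hε₁
  have hε₁0 : ε₁ ≠ 0 := by
    simp only [hε₁, ne_eq, min_eq_iff, not_or]
    constructor <;> rintro ⟨h1, -⟩
    · exact hε.ne' h1
    · exact one_ne_zero h1
  set D : ENNReal := C' + 1 with hD
  have hD0 : D ≠ 0 := by simp [hD]
  have hDtop : D ≠ ⊤ := by
    rw [hD]; exact ENNReal.add_ne_top.2 ⟨hC'top, ENNReal.one_ne_top⟩
  set δ' : ENNReal := (ε₁ / 2) / D with hδ'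
  have hhalf0 : ε₁ / 2 ≠ 0 := by
    simp only [ne_eq, ENNReal.div_eq_zero_iff, not_or]
    exact ⟨hε₁0, ENNReal.ofNat_ne_top⟩
  have hδ'0 : δ' ≠ 0 := by
    rw [hδ']
    simp only [ne_eq, ENNReal.div_eq_zero_iff, not_or]
    exact ⟨⟨hε₁0, ENNReal.ofNat_ne_top⟩, hDtop⟩
  obtain ⟨g, hgsupp, hgsub, hgcont, hgmem⟩ :=
    hF'mem.exists_hasCompactSupport_eLpNorm_sub_le hqtop hδ'0
  have hgsm : StronglyMeasurable g := hgcont.stronglyMeasurable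
  have hmid := Mt_cc v hv hunit T hT0 p hp g hgcont hgsupp
  rw [ENNReal.tendsto_nhds_zero] at hmid
  have hmid2 := hmid (ε₁ / 2) (pos_iff_ne_zero.mpr hhalf0)
  filter_upwards [hmid2, self_mem_nhdsWithin] with t hmidt ht
  have ht0 : 0 < t := ht.1
  have htT : t < T := ht.2
  -- decompose
  set f1 : E2 → ℝ := fun X => (1 / (2 * t)) * ∫ s in (-t)..t, (F' (X + s • v X) - g (X + s • v X))
    with hf1
  set f2 : E2 → ℝ := fun X => ((1 / (2 * t)) * ∫ s in (-t)..t, g (X + s • v X)) - g X with hf2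
  set f3 : E2 → ℝ := fun X => g X - F' X with hf3
  have hdecomp : (fun X => ((1 / (2 * t)) * ∫ s in (-t)..t, F' (X + s • v X)) - F' X)
      =ᵐ[volume] fun X => (f1 X + f2 X) + f3 X := by
    filter_upwards [hint] with X hX
    have hIntF : IntervalIntegrable (fun s => F' (X + s • v X)) volume (-t) t := by
      rw [intervalIntegrable_iff, Set.uIoc_of_le (by linarith : -t ≤ t)]
      have hmemt : MemLp (fun s => F' (X + s • v X)) q (volume.restrict (Set.Ioc (-t) t)) := by
        refine ⟨(hF'sm.comp_measurable
          ((hΦcont.comp (Continuous.prodMk_right X)).measurable)).aestronglyMeasurable, ?_⟩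
        rw [eLpNorm_eq_lintegral_rpow_enorm_toReal hq0 hqtop, hqr]
        apply ENNReal.rpow_lt_top_of_nonneg (by positivity)
        refine (lt_of_le_of_lt ?_ hX).ne
        rw [hlamT]
        exact lintegral_mono' (Measure.restrict_mono
          (Set.Ioc_subset_Ioc (by linarith) (by linarith)) le_rfl) le_rfl
      have : IsFiniteMeasure (volume.restrict (Set.Ioc (-t) t)) := by
        constructor
        rw [Measure.restrict_apply MeasurableSet.univ, Set.univ_inter]
        exact lt_of_le_of_lt (le_of_eq (Real.volume_Ioc)) ENNReal.ofReal_lt_top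
      exact hmemt.integrable hq1
    have hIntg : IntervalIntegrable (fun s => g (X + s • v X)) volume (-t) t :=
      (hgcont.comp (continuous_const.add (continuous_id.smul continuous_const))).intervalIntegrable _ _
    have hsub : (∫ s in (-t)..t, (F' (X + s • v X) - g (X + s • v X)))
        = (∫ s in (-t)..t, F' (X + s • v X)) - ∫ s in (-t)..t, g (X + s • v X) :=
      intervalIntegral.integral_sub hIntF hIntg
    simp only [hf1, hf2, hf3, hsub]
    ring
  rw [eLpNorm_congr_ae hdecomp]
  -- measurability of the pieces
  have hf1sm : StronglyMeasurable f1 := by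
    have := Mt_meas v hv (fun y => F' y - g y) (hF'sm.sub hgsm) t ht0
    exact this.const_mul _
  have hf2sm : StronglyMeasurable f2 :=
    ((Mt_meas v hv g hgsm t ht0).const_mul _).sub hgsm
  have hf3sm : StronglyMeasurable f3 := hgsm.sub hF'sm
  -- triangle inequality
  have htri : eLpNorm (fun X => (f1 X + f2 X) + f3 X) q volume
      ≤ (eLpNorm f1 q volume + eLpNorm f2 q volume) + eLpNorm f3 q volume := by
    have e1 : (fun X => (f1 X + f2 X) + f3 X) = (fun X => f1 X + f2 X) + f3 := rfl
    have e2 : (fun X => f1 X + f2 X) = f1 + f2 := rfl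
    rw [e1]
    refine le_trans (eLpNorm_add_le ?_ hf3sm.aestronglyMeasurable hq1) ?_
    · rw [e2]; exact (hf1sm.add hf2sm).aestronglyMeasurable
    gcongr
    rw [e2]
    exact eLpNorm_add_le hf1sm.aestronglyMeasurable hf2sm.aestronglyMeasurable hq1
  refine le_trans htri ?_
  -- bound each piece
  have hb1 : eLpNorm f1 q volume ≤ C' * δ' := by
    have := Mt_bound v hv T hT0 C hC p hp (fun y => F' y - g y) (hF'sm.sub hgsm)
      t ht0 htT.le
    refine le_trans this ?_
    rw [← hC'def]
    gcongr
    have e3 : (fun y => F' y - g y) = F' - g := rfl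
    rw [e3]
    exact hgsub
  have hb3 : eLpNorm f3 q volume ≤ δ' := by
    have e4 : f3 = g - F' := rfl
    rw [e4, eLpNorm_sub_comm]
    exact hgsub
  calc (eLpNorm f1 q volume + eLpNorm f2 q volume) + eLpNorm f3 q volume
      ≤ (C' * δ' + ε₁ / 2) + δ' := add_le_add (add_le_add hb1 hmidt) hb3
    _ = (C' * δ' + 1 * δ') + ε₁ / 2 := by rw [one_mul]; ring
    _ = D * δ' + ε₁ / 2 := by rw [hD, add_mul]
    _ = ε₁ / 2 + ε₁ / 2 := by rw [hδ', ENNReal.mul_div_cancel hD0 hDtop]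
    _ = ε₁ := ENNReal.add_halves _
    _ ≤ ε := min_le_left _ _
end

section
/- Let v : ℝ² → ℝ² be a unit Lipschitz vector field with constant K and 0 < T < 1/K. For every F ∈ L¹(ℝ²), for almost every s ∈ [−T/2, T/2], for almost every (x,y) ∈ ℝ², lim_{t→0} (1/(2t))∫_{−t}^{t} F[(x,y) + β·v(S_s^{−1}(x,y))] dβ = F(x,y), where S_s(X) = X + s·v(X). -/
open MeasureTheory Real Filter
open scoped NNReal ENNReal Topology

noncomputable section
local notation "𝔼" => EuclideanSpace ℝ (Fin 2)

lemma zyg_image_le {f : 𝔼 → 𝔼} {L : ℝ≥0} (hf : LipschitzWith L f) (A : Set 𝔼) :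
    volume (f '' A) ≤ (L : ℝ≥0∞) ^ (2 : ℕ) * volume A := by
  have hfr : Module.finrank ℝ 𝔼 = 2 := finrank_euclideanSpace_fin
  haveI hH : (μH[((2:ℕ):ℝ)] : Measure 𝔼).IsAddHaarMeasure := by
    have := MeasureTheory.isAddHaarMeasure_hausdorffMeasure (E := 𝔼)
    rwa [hfr] at this
  have hvol : (volume : Measure 𝔼)
      = MeasureTheory.Measure.addHaarScalarFactor (volume : Measure 𝔼) μH[((2:ℕ):ℝ)]
        • (μH[((2:ℕ):ℝ)] : Measure 𝔼) :=
    MeasureTheory.Measure.isAddLeftInvariant_eq_smul _ _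
  have key := hf.hausdorffMeasure_image_le (by norm_num : (0:ℝ) ≤ ((2:ℕ):ℝ)) A
  rw [ENNReal.rpow_natCast] at key
  have happ : ∀ B : Set 𝔼, volume B
      = (MeasureTheory.Measure.addHaarScalarFactor (volume : Measure 𝔼) μH[((2:ℕ):ℝ)] : ℝ≥0∞)
        * μH[((2:ℕ):ℝ)] B := by
    intro B
    conv_lhs => rw [hvol]
    simp [Measure.smul_apply, NNReal.smul_def]
  calc volume (f '' A) = _ := happ _
    _ ≤ _ * ((L : ℝ≥0∞) ^ (2:ℕ) * μH[((2:ℕ):ℝ)] A) := by gcongr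
    _ = (L : ℝ≥0∞) ^ (2:ℕ) * (_ * μH[((2:ℕ):ℝ)] A) := by ring
    _ = (L : ℝ≥0∞) ^ (2:ℕ) * volume A := by rw [← happ]

set_option linter.unusedSectionVars false

section S
variable {v : 𝔼 → 𝔼} {K c : ℝ}
  (hK : 0 < K) (hlip : ∀ X Y, ‖v X - v Y‖ ≤ K * ‖X - Y‖)
  (hc0 : 0 < c) (hcK : c * K < 1)
include hK hlip hc0

lemma zyg_smul_le {s : ℝ} (hs : |s| ≤ c) (X Y : 𝔼) :
    ‖s • (v X - v Y)‖ ≤ c * K * ‖X - Y‖ := by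
  rw [norm_smul, Real.norm_eq_abs]
  calc |s| * ‖v X - v Y‖ ≤ c * (K * ‖X - Y‖) :=
      mul_le_mul hs (hlip X Y) (norm_nonneg _) hc0.le
    _ = c * K * ‖X - Y‖ := by ring

lemma zyg_lower {s : ℝ} (hs : |s| ≤ c) (X Y : 𝔼) :
    (1 - c * K) * ‖X - Y‖ ≤ ‖(X + s • v X) - (Y + s • v Y)‖ := by
  have heq : (X + s • v X) - (Y + s • v Y) = (X - Y) + s • (v X - v Y) := by
    rw [smul_sub]; abel
  have h1 : ‖X - Y‖ ≤ ‖(X - Y) + s • (v X - v Y)‖ + ‖s • (v X - v Y)‖ := by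
    calc ‖X - Y‖ = ‖((X - Y) + s • (v X - v Y)) - s • (v X - v Y)‖ := by
          congr 1; abel
      _ ≤ _ := norm_sub_le _ _
  have h2 := zyg_smul_le hK hlip hc0 hs X Y
  rw [heq]; nlinarith [norm_nonneg (X - Y)]

lemma zyg_inj {s : ℝ} (hs : |s| ≤ c) (hcK : c * K < 1) :
    Function.Injective (fun Y : 𝔼 => Y + s • v Y) := by
  intro X Y h
  have hl := zyg_lower hK hlip hc0 hs X Y
  simp only at h
  rw [h, sub_self, norm_zero] at hl
  have h1 : ‖X - Y‖ ≤ 0 := by nlinarith [norm_nonneg (X - Y)]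
  rw [← sub_eq_zero]
  exact norm_eq_zero.1 (le_antisymm h1 (norm_nonneg _))

include hcK

lemma zyg_surj {s : ℝ} (hs : |s| ≤ c) :
    Function.Surjective (fun Y : 𝔼 => Y + s • v Y) := by
  intro X₀
  set g : 𝔼 → 𝔼 := fun Y => X₀ - s • v Y with hg
  have hck0 : (0:ℝ) ≤ c * K := mul_nonneg hc0.le hK.le
  have hlipg : LipschitzWith (Real.toNNReal (c * K)) g := by
    apply LipschitzWith.of_dist_le_mul
    intro a b
    simp only [dist_eq_norm, hg]
    have : (X₀ - s • v a) - (X₀ - s • v b) = s • (v b - v a) := by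
      rw [smul_sub]; abel
    rw [this, Real.coe_toNNReal _ hck0]
    have h2 := zyg_smul_le hK hlip hc0 hs b a
    rwa [norm_sub_rev b a] at h2
  have hcon : ContractingWith (Real.toNNReal (c * K)) g := by
    refine ⟨?_, hlipg⟩
    rw [← NNReal.coe_lt_coe, Real.coe_toNNReal _ hck0]
    exact_mod_cast hcK
  obtain ⟨y, hy, -⟩ := hcon.exists_fixedPoint X₀ (edist_ne_top _ _)
  exact ⟨y, (sub_eq_iff_eq_add.mp hy.eq).symm⟩

lemma zyg_preimage_le {s : ℝ} (hs : |s| ≤ c) (A : Set 𝔼) :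
    volume ((fun Y : 𝔼 => Y + s • v Y) ⁻¹' A)
      ≤ ((Real.toNNReal (1 - c * K))⁻¹ : ℝ≥0∞) ^ (2:ℕ) * volume A := by
  have hρ : (0:ℝ) < 1 - c * K := by linarith
  set S : 𝔼 → 𝔼 := fun Y => Y + s • v Y with hS
  set φ := Function.invFun S with hφ
  have hsurj := zyg_surj hK hlip hc0 hcK hs (v := v)
  have hinj := zyg_inj hK hlip hc0 hs hcK (v := v)
  have hlipφ : LipschitzWith (Real.toNNReal (1 - c * K))⁻¹ φ := by
    apply LipschitzWith.of_dist_le_mul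
    intro a b
    have ha : S (φ a) = a := Function.rightInverse_invFun hsurj a
    have hb : S (φ b) = b := Function.rightInverse_invFun hsurj b
    have hl := zyg_lower hK hlip hc0 hs (φ a) (φ b)
    rw [show ((φ a) + s • v (φ a)) = S (φ a) from rfl,
      show ((φ b) + s • v (φ b)) = S (φ b) from rfl, ha, hb] at hl
    rw [dist_eq_norm, dist_eq_norm, NNReal.coe_inv, Real.coe_toNNReal _ hρ.le]
    rw [inv_mul_eq_div, le_div_iff₀ hρ]
    linarith [hl]
  have hsub : S ⁻¹' A ⊆ φ '' A := fun Y hY =>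
    ⟨S Y, hY, Function.leftInverse_invFun hinj Y⟩
  calc volume (S ⁻¹' A) ≤ volume (φ '' A) := measure_mono hsub
    _ ≤ _ := zyg_image_le hlipφ A
    _ = ((Real.toNNReal (1 - c * K))⁻¹ : ℝ≥0∞) ^ (2:ℕ) * volume A := by
        rw [ENNReal.coe_inv (by simp [Real.toNNReal_eq_zero]; linarith)]

lemma zyg_forward_le {s : ℝ} (hs : |s| ≤ c) (A : Set 𝔼) :
    volume A ≤ ((Real.toNNReal (1 + c * K)) : ℝ≥0∞) ^ (2:ℕ)
      * volume ((fun Y : 𝔼 => Y + s • v Y) ⁻¹' A) := by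
  set S : 𝔼 → 𝔼 := fun Y => Y + s • v Y with hS
  have hsurj := zyg_surj hK hlip hc0 hcK hs (v := v)
  have hck0 : (0:ℝ) ≤ c * K := mul_nonneg hc0.le hK.le
  have hlipS : LipschitzWith (Real.toNNReal (1 + c * K)) S := by
    apply LipschitzWith.of_dist_le_mul
    intro a b
    simp only [dist_eq_norm, hS]
    have h1 : (a + s • v a) - (b + s • v b) = (a - b) + s • (v a - v b) := by
      rw [smul_sub]; abel
    rw [h1, Real.coe_toNNReal _ (by linarith)]
    calc ‖(a - b) + s • (v a - v b)‖ ≤ ‖a - b‖ + ‖s • (v a - v b)‖ := norm_add_le _ _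
      _ ≤ ‖a - b‖ + c * K * ‖a - b‖ := by
          have := zyg_smul_le hK hlip hc0 hs a b; linarith
      _ = (1 + c * K) * ‖a - b‖ := by ring
  have himg : A = S '' (S ⁻¹' A) := (Set.image_preimage_eq A hsurj).symm
  calc volume A = volume (S '' (S ⁻¹' A)) := by rw [← himg]
    _ ≤ _ := zyg_image_le hlipS _

lemma zyg_lintegral_le {s : ℝ} (hs : |s| ≤ c) (hvmeas : Continuous v)
    (h : 𝔼 → ℝ≥0∞) (hh : Measurable h) :
    ∫⁻ Y, h (Y + s • v Y) ∂(volume : Measure 𝔼)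
      ≤ ((Real.toNNReal (1 - c * K))⁻¹ : ℝ≥0∞) ^ (2:ℕ) * ∫⁻ Y, h Y ∂volume := by
  set S : 𝔼 → 𝔼 := fun Y => Y + s • v Y with hS
  have hSmeas : Measurable S := (show Continuous (fun Y : 𝔼 => Y + s • v Y) from continuous_id.add (hvmeas.const_smul s)).measurable
  have h1 : ∫⁻ Y, h (S Y) ∂(volume : Measure 𝔼) = ∫⁻ Y, h Y ∂(Measure.map S volume) :=
    (lintegral_map hh hSmeas).symm
  rw [show ∫⁻ Y, h (Y + s • v Y) ∂(volume : Measure 𝔼) = ∫⁻ Y, h (S Y) ∂volume from rfl, h1]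
  have hle : Measure.map S volume
      ≤ (((Real.toNNReal (1 - c * K))⁻¹ : ℝ≥0∞) ^ (2:ℕ)) • (volume : Measure 𝔼) := by
    refine Measure.le_intro fun A hA _ => ?_
    rw [Measure.map_apply hSmeas hA]
    simpa [Measure.smul_apply, smul_eq_mul] using zyg_preimage_le hK hlip hc0 hcK hs A (v := v)
  calc ∫⁻ Y, h Y ∂(Measure.map S volume)
      ≤ ∫⁻ Y, h Y ∂((((Real.toNNReal (1 - c * K))⁻¹ : ℝ≥0∞) ^ (2:ℕ)) • (volume : Measure 𝔼)) :=
        lintegral_mono' hle (le_refl _)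
    _ = _ := lintegral_smul_measure _ _

end S


lemma zyg_prod_null_swap {α β : Type*} [MeasurableSpace α] [MeasurableSpace β]
    (μ : Measure α) (ν : Measure β) [SFinite μ] [SFinite ν] {D : Set (α × β)}
    (hD : MeasurableSet D) :
    μ.prod ν D = 0 ↔ ∀ᵐ y ∂ν, μ {x | (x, y) ∈ D} = 0 := by
  have hswap : (ν.prod μ) (Prod.swap ⁻¹' D) = μ.prod ν D := by
    rw [← Measure.prod_swap, Measure.map_apply measurable_swap (hD.preimage measurable_swap)]
    simp [Set.preimage_preimage]
  rw [← hswap, Measure.measure_prod_null (hD.preimage measurable_swap)]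
  constructor
  · intro h
    filter_upwards [h] with y hy
    exact hy
  · intro h
    filter_upwards [h] with y hy
    exact hy

set_option maxHeartbeats 2000000 in
theorem zygmund_weak_conjecture
    (v : EuclideanSpace ℝ (Fin 2) → EuclideanSpace ℝ (Fin 2)) (K T : ℝ)
    (hK : 0 < K) (hlip : ∀ X Y, ‖v X - v Y‖ ≤ K * ‖X - Y‖)
    (hunit : ∀ X, ‖v X‖ = 1) (hT0 : 0 < T) (hT : T < 1 / K)
    (F : EuclideanSpace ℝ (Fin 2) → ℝ) (hF : Integrable F volume) :
    ∀ᵐ s ∂(volume.restrict (Set.Icc (-(T / 2)) (T / 2))),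
      ∀ᵐ X ∂(volume : Measure (EuclideanSpace ℝ (Fin 2))),
        Tendsto (fun t : ℝ => (1 / (2 * t)) *
            ∫ β in (-t)..t, F (X + β • v (Function.invFun (fun Y => Y + s • v Y) X)))
          (nhdsWithin 0 (Set.Ioi 0)) (nhds (F X)) := by
  classical
  set c : ℝ := T / 2 + 1 / (2 * K) with hc
  have hc0 : 0 < c := by positivity
  have hTK : T * K < 1 := by
    rw [lt_div_iff₀ hK] at hT; linarith
  have hcK : c * K < 1 := by
    have : c * K = T * K / 2 + 1 / 2 := by
      have h : K * (1 / (2 * K)) = 1 / 2 := by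
        rw [mul_one_div, div_eq_iff (by positivity)]; ring
      linear_combination K * hc + h
    rw [this]; linarith
  have hTc : T / 2 < c := by
    have : 0 < 1 / (2 * K) := by positivity
    linarith
  -- continuity / measurability of basic maps
  have hvcont : Continuous v := by
    have : LipschitzWith (Real.toNNReal K) v := by
      apply LipschitzWith.of_dist_le_mul
      intro a b
      rw [dist_eq_norm, dist_eq_norm, Real.coe_toNNReal _ hK.le]
      exact hlip a b
    exact this.continuous
  have hΦcont : Continuous fun p : 𝔼 × ℝ => p.1 + p.2 • v p.1 :=
    continuous_fst.add (continuous_snd.smul (hvcont.comp continuous_fst))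
  -- measurable representative of F
  obtain ⟨g, hg, hFg⟩ : ∃ g, StronglyMeasurable g ∧ F =ᵐ[volume] g :=
    ⟨hF.aestronglyMeasurable.mk F, hF.aestronglyMeasurable.stronglyMeasurable_mk,
      hF.aestronglyMeasurable.ae_eq_mk⟩
  have hg_int : Integrable g volume := hF.congr hFg
  obtain ⟨N, hN_sub, hN_meas, hN0⟩ :
      ∃ N, {x | F x ≠ g x} ⊆ N ∧ MeasurableSet N ∧ volume N = 0 :=
    exists_measurable_superset_of_null hFg
  -- the slice null sets
  have hsliceN : ∀ σ : ℝ, |σ| ≤ c → volume {Y : 𝔼 | Y + σ • v Y ∈ N} = 0 := by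
    intro σ hσ
    have h1 := zyg_preimage_le hK hlip hc0 hcK hσ N (v := v)
    rw [hN0, mul_zero] at h1
    exact le_antisymm h1 (zero_le)
  -- the key function G
  set G : 𝔼 × ℝ → ℝ :=
    fun p => Set.indicator {p : 𝔼 × ℝ | p.2 ∈ Set.Ioo (-c) c}
      (fun p => g (p.1 + p.2 • v p.1)) p with hGdef
  have hGsm : StronglyMeasurable G := by
    apply StronglyMeasurable.indicator
    · exact hg.comp_measurable hΦcont.measurable
    · exact measurable_snd measurableSet_Ioo
  have hGmem : ∀ (Y : 𝔼) (σ : ℝ), σ ∈ Set.Ioo (-c) c → G (Y, σ) = g (Y + σ • v Y) := by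
    intro Y σ hσ
    exact Set.indicator_of_mem (by exact hσ) _
  -- integrability of G
  have hGint : Integrable G (volume.prod volume) := by
    refine ⟨hGsm.aestronglyMeasurable, ?_⟩
    rw [HasFiniteIntegral]
    set C : ℝ≥0∞ := ((Real.toNNReal (1 - c * K))⁻¹ : ℝ≥0∞) ^ (2:ℕ) with hC
    set I₀ : ℝ≥0∞ := ∫⁻ Y, (‖g Y‖₊ : ℝ≥0∞) ∂(volume : Measure 𝔼) with hI₀
    have hI₀fin : I₀ < ∞ := hg_int.2
    have hGnn : Measurable fun p : 𝔼 × ℝ => (‖G p‖₊ : ℝ≥0∞) :=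
      hGsm.measurable.nnnorm.coe_nnreal_ennreal
    calc ∫⁻ p, (‖G p‖₊ : ℝ≥0∞) ∂(volume.prod volume)
        = ∫⁻ σ, ∫⁻ Y, (‖G (Y, σ)‖₊ : ℝ≥0∞) ∂volume ∂volume :=
          lintegral_prod_symm' _ hGnn
      _ ≤ ∫⁻ σ, (Set.Ioo (-c) c).indicator (fun _ => C * I₀) σ ∂volume := by
          apply lintegral_mono
          intro σ
          by_cases hσ : σ ∈ Set.Ioo (-c) c
          · rw [Set.indicator_of_mem hσ]
            have heq : ∀ Y : 𝔼, (‖G (Y, σ)‖₊ : ℝ≥0∞) = (‖g (Y + σ • v Y)‖₊ : ℝ≥0∞) := by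
              intro Y; rw [hGmem Y σ hσ]
            simp only [heq]
            have habs : |σ| ≤ c := le_of_lt (abs_lt.2 ⟨hσ.1, hσ.2⟩)
            exact zyg_lintegral_le hK hlip hc0 hcK habs hvcont _
              hg.measurable.nnnorm.coe_nnreal_ennreal
          · rw [Set.indicator_of_notMem hσ]
            have heq : ∀ Y : 𝔼, G (Y, σ) = 0 := by
              intro Y; exact Set.indicator_of_notMem (by exact hσ) _
            simp [heq]
      _ = volume (Set.Ioo (-c) c) * (C * I₀) := by
          rw [lintegral_indicator measurableSet_Ioo, setLIntegral_const]
          ring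
      _ < ∞ := by
          apply ENNReal.mul_lt_top (by simp) (ENNReal.mul_lt_top ?_ hI₀fin)
          rw [hC]
          refine ENNReal.pow_lt_top ?_
          rw [ENNReal.inv_lt_top, ENNReal.coe_pos, Real.toNNReal_pos]
          linarith
  -- the averaged comparison sequence
  set rad : ℕ → ℝ := fun n => 1 / ((n : ℝ) + 1) with hrad
  have hradpos : ∀ n, 0 < rad n := fun n => by positivity
  set a : ℕ → 𝔼 × ℝ → ℝ :=
    fun n p => ⨍ y in Metric.closedBall p.2 (rad n), ‖G (p.1, y) - G p‖ ∂volume with hadef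
  have hameas : ∀ n, Measurable (a n) := by
    intro n
    have hH : StronglyMeasurable fun q : (𝔼 × ℝ) × ℝ =>
        Set.indicator {q : (𝔼 × ℝ) × ℝ | dist q.2 q.1.2 ≤ rad n}
          (fun q => ‖G (q.1.1, q.2) - G q.1‖) q := by
      apply StronglyMeasurable.indicator
      · exact ((hGsm.comp_measurable (measurable_fst.fst.prodMk measurable_snd)).sub
          (hGsm.comp_measurable measurable_fst)).norm
      · exact measurableSet_le (measurable_snd.dist measurable_fst.snd) measurable_const
    have hint := hH.integral_prod_right' (ν := (volume : Measure ℝ))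
    have haeq : a n = fun p =>
        (volume (Metric.closedBall p.2 (rad n))).toReal⁻¹ *
          ∫ y, Set.indicator {q : (𝔼 × ℝ) × ℝ | dist q.2 q.1.2 ≤ rad n}
            (fun q => ‖G (q.1.1, q.2) - G q.1‖) (p, y) ∂volume := by
      funext p
      simp only [hadef]
      rw [setAverage_eq, smul_eq_mul]
      congr 1
      rw [← MeasureTheory.integral_indicator measurableSet_closedBall]
      all_goals congr 1
    rw [haeq]
    apply Measurable.mul
    · simp only [Real.volume_closedBall]
      exact measurable_const
    · exact hint.measurable
  set Agood : Set (𝔼 × ℝ) := {p | Tendsto (fun n => a n p) atTop (𝓝 0)} with hAgood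
  have hAmeas : MeasurableSet Agood := by
    exact measurableSet_tendsto_fun (l := (atTop : Filter ℕ)) hameas
      (measurable_const : Measurable fun _ : 𝔼 × ℝ => (0:ℝ))
  -- a.e. (Y, s) good
  have hAae : ∀ᵐ Y ∂(volume : Measure 𝔼), ∀ᵐ σ ∂(volume : Measure ℝ), (Y, σ) ∈ Agood := by
    filter_upwards [hGint.prod_right_ae] with Y hψint
    have hloc : LocallyIntegrable (fun y => G (Y, y)) volume := hψint.locallyIntegrable
    have hδ : Tendsto rad atTop (𝓝[>] (0:ℝ)) := by
      rw [tendsto_nhdsWithin_iff]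
      constructor
      · exact tendsto_one_div_add_atTop_nhds_zero_nat
      · exact Eventually.of_forall fun n => hradpos n
    filter_upwards [IsUnifLocDoublingMeasure.ae_tendsto_average_norm_sub
      (μ := (volume : Measure ℝ)) hloc 1] with σ hσ
    exact hσ (fun _ => σ) rad hδ (Eventually.of_forall fun n => by
      simp [Metric.mem_closedBall, (hradpos n).le])
  have hprodA : (volume.prod volume : Measure (𝔼 × ℝ)) Agoodᶜ = 0 := by
    rw [Measure.measure_prod_null hAmeas.compl]
    filter_upwards [hAae] with Y hY
    rw [show (Prod.mk Y ⁻¹' Agoodᶜ) = {σ : ℝ | ¬ ((Y, σ) ∈ Agood)} from rfl]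
    exact hY
  have hswapA : ∀ᵐ σ ∂(volume : Measure ℝ), volume {Y : 𝔼 | (Y, σ) ∈ Agoodᶜ} = 0 :=
    (zyg_prod_null_swap _ _ hAmeas.compl).1 hprodA
  -- the line null sets through a.e. Y
  set W : Set (𝔼 × ℝ) := {p | p.2 ∈ Set.Ioo (-c) c ∧ p.1 + p.2 • v p.1 ∈ N} with hW
  have hWmeas : MeasurableSet W := by
    apply MeasurableSet.inter
    · exact measurable_snd measurableSet_Ioo
    · exact hΦcont.measurable hN_meas
  have hWnull : (volume.prod volume : Measure (𝔼 × ℝ)) W = 0 := by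
    rw [zyg_prod_null_swap _ _ hWmeas]
    apply Eventually.of_forall
    intro σ
    by_cases hσ : σ ∈ Set.Ioo (-c) c
    · have habs : |σ| ≤ c := le_of_lt (abs_lt.2 ⟨hσ.1, hσ.2⟩)
      have hsub : {x : 𝔼 | (x, σ) ∈ W} ⊆ {Y : 𝔼 | Y + σ • v Y ∈ N} := fun x hx => hx.2
      exact le_antisymm (le_trans (measure_mono hsub) (hsliceN σ habs).le) (zero_le)
    · have hempty : {x : 𝔼 | (x, σ) ∈ W} = ∅ := by
        ext x; simp only [Set.mem_setOf_eq, Set.mem_empty_iff_false, iff_false]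
        intro hx; exact hσ hx.1
      simp [hempty]
  have hNline : ∀ᵐ Y ∂(volume : Measure 𝔼), volume {σ : ℝ | (Y, σ) ∈ W} = 0 := by
    have h1 := (Measure.measure_prod_null hWmeas).1 hWnull
    filter_upwards [h1] with Y hY
    exact hY
  -- integrability of slices
  have hψae : ∀ᵐ Y ∂(volume : Measure 𝔼), Integrable (fun y => G (Y, y)) volume :=
    hGint.prod_right_ae
  -- final assembly
  filter_upwards [ae_restrict_mem measurableSet_Icc, ae_restrict_of_ae hswapA]
    with s hsIcc hAs
  have hsc : |s| ≤ T / 2 := abs_le.2 ⟨by linarith [hsIcc.1], hsIcc.2⟩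
  have hsc' : |s| ≤ c := le_of_lt (lt_of_le_of_lt hsc hTc)
  have hslt : |s| < c := lt_of_le_of_lt hsc hTc
  have hsIoo : s ∈ Set.Ioo (-c) c := Set.mem_Ioo.2 (abs_lt.1 hslt)
  have hAsae : ∀ᵐ Y ∂(volume : Measure 𝔼), (Y, s) ∈ Agood := by
    rw [ae_iff]
    exact hAs
  have hsliceNs : ∀ᵐ Y ∂(volume : Measure 𝔼), (Y + s • v Y) ∉ N := by
    rw [ae_iff]
    simpa using hsliceN s hsc'
  -- the good-Y statement
  have hgood : ∀ᵐ Y ∂(volume : Measure 𝔼),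
      Tendsto (fun t : ℝ => (1 / (2 * t)) *
          ∫ β in (-t)..t, F ((Y + s • v Y) + β • v (Function.invFun
            (fun Z : 𝔼 => Z + s • v Z) (Y + s • v Y))))
        (𝓝[>] 0) (𝓝 (F (Y + s • v Y))) := by
    filter_upwards [hψae, hNline, hAsae, hsliceNs] with Y hψ hNσ hA hYN
    have hinvX : Function.invFun (fun Z : 𝔼 => Z + s • v Z) (Y + s • v Y) = Y :=
      Function.leftInverse_invFun (zyg_inj hK hlip hc0 hsc' hcK) Y
    rw [hinvX]
    have hFX : F (Y + s • v Y) = g (Y + s • v Y) := by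
      by_contra h
      exact hYN (hN_sub h)
    have hGX : G (Y, s) = g (Y + s • v Y) := hGmem Y s hsIoo
    rw [hFX, ← hGX]
    have hA' : Tendsto (fun n => a n (Y, s)) atTop (𝓝 0) := hA
    -- setup the squeeze
    set t₀ : ℝ := min (c - |s|) 1 with ht₀
    have ht₀pos : 0 < t₀ := lt_min (by linarith) one_pos
    -- sequence index
    set m : ℝ → ℕ := fun t => ⌈1/t⌉₊ - 2 with hm
    have hmkey : ∀ t : ℝ, t ∈ Set.Ioo (0:ℝ) t₀ →
        t < rad (m t) ∧ rad (m t) ≤ 2 * t := by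
      intro t ht
      have ht0 : 0 < t := ht.1
      have ht1 : t < 1 := lt_of_lt_of_le ht.2 (min_le_right _ _)
      have h1t : 1 < 1 / t := by
        rw [lt_div_iff₀ ht0]; linarith
      have h2 : 2 ≤ ⌈1/t⌉₊ := by
        have h11 : 1 < ⌈1/t⌉₊ := by
          rw [Nat.lt_ceil]; exact_mod_cast h1t
        omega
      have hm2 : (m t : ℝ) + 2 = (⌈1/t⌉₊ : ℝ) := by
        simp only [hm]
        have h3 : (⌈1/t⌉₊ - 2) + 2 = ⌈1/t⌉₊ := by omega
        exact_mod_cast congrArg (Nat.cast : ℕ → ℝ) h3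
      have hub : 1 / t ≤ (m t : ℝ) + 2 := by
        rw [hm2]; exact Nat.le_ceil _
      have hlb : (m t : ℝ) + 1 < 1 / t := by
        have h4 := Nat.ceil_lt_add_one (le_of_lt (lt_trans one_pos h1t))
        rw [← hm2] at h4
        linarith
      have hmt2 : (0:ℝ) < (m t : ℝ) + 2 := by positivity
      have hmt1 : (0:ℝ) < (m t : ℝ) + 1 := by positivity
      have h1 : 1 ≤ t * ((m t : ℝ) + 2) := by
        rw [div_le_iff₀ ht0] at hub
        linarith
      constructor
      · simp only [hrad]
        rw [lt_div_iff₀ ht0] at hlb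
        rw [lt_div_iff₀ hmt1]
        nlinarith
      · simp only [hrad]
        rw [div_le_iff₀ hmt1]
        nlinarith [ht0.le, (Nat.cast_nonneg (m t) : (0:ℝ) ≤ (m t : ℝ))]
    -- the eventual bound
    have hbound : ∀ᶠ t in 𝓝[>] (0:ℝ),
        |(1 / (2 * t)) * (∫ β in (-t)..t, F ((Y + s • v Y) + β • v Y)) - G (Y, s)|
          ≤ 2 * a (m t) (Y, s) := by
      filter_upwards [Ioo_mem_nhdsGT_of_mem (Set.mem_Ico.2 ⟨le_refl (0:ℝ), ht₀pos⟩)] with t ht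
      obtain ⟨hr2, hr3⟩ := hmkey t ht
      have ht0 : 0 < t := ht.1
      have htc : t < c - |s| := lt_of_lt_of_le ht.2 (min_le_left _ _)
      set r : ℝ := rad (m t) with hr
      have hrpos : 0 < r := hradpos _
      -- step 1 : replace F by G (Y, ·)
      have hsub : ∀ β : ℝ, β ∈ Set.uIoc (-t) t → s + β ∈ Set.Ioo (-c) c := by
        intro β hβ
        rw [Set.uIoc_of_le (by linarith : -t ≤ t)] at hβ
        have h3 : |s| < c - t := by linarith
        obtain ⟨h4, h5⟩ := abs_lt.1 h3
        exact Set.mem_Ioo.2 ⟨by linarith [hβ.1], by linarith [hβ.2]⟩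
      have hstep1 : (∫ β in (-t)..t, F ((Y + s • v Y) + β • v Y))
          = ∫ β in (-t)..t, G (Y, s + β) := by
        apply intervalIntegral.integral_congr_ae
        have htrans : volume {β : ℝ | (Y, s + β) ∈ W} = 0 := by
          have hpre : {β : ℝ | (Y, s + β) ∈ W}
              = (fun β => s + β) ⁻¹' {σ : ℝ | (Y, σ) ∈ W} := rfl
          rw [hpre, measure_preimage_add]
          exact hNσ
        have hae2 : ∀ᵐ β : ℝ, (Y, s + β) ∉ W := by
          rw [ae_iff]; simpa using htrans
        filter_upwards [hae2] with β hβ hmem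
        have hsβ : s + β ∈ Set.Ioo (-c) c := hsub β hmem
        have hXeq : (Y + s • v Y) + β • v Y = Y + (s + β) • v Y := by
          rw [add_smul]; abel
        have hnotN : Y + (s + β) • v Y ∉ N := fun hN' => hβ ⟨hsβ, hN'⟩
        have hFg' : F (Y + (s + β) • v Y) = g (Y + (s + β) • v Y) := by
          by_contra h; exact hnotN (hN_sub h)
        rw [hXeq, hFg', ← hGmem Y (s+β) hsβ]
      have hstep2 : (∫ β in (-t)..t, G (Y, s + β))
          = ∫ u in (s - t)..(s + t), G (Y, u) := by
        have h6 := intervalIntegral.integral_comp_add_left (a := -t) (b := t)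
          (fun u => G (Y, u)) s
        rw [h6]
        norm_num [sub_eq_add_neg]
      rw [hstep1, hstep2]
      have hψt : IntervalIntegrable (fun σ => G (Y, σ)) volume (s - t) (s + t) :=
        hψ.intervalIntegrable
      have hconst : (∫ _ in (s - t)..(s + t), G (Y, s)) = (2 * t) * G (Y, s) := by
        rw [intervalIntegral.integral_const, smul_eq_mul]
        ring_nf
      have hsplit : (1 / (2 * t)) * (∫ u in (s - t)..(s + t), G (Y, u)) - G (Y, s)
          = (1 / (2 * t)) * ∫ u in (s - t)..(s + t), (G (Y, u) - G (Y, s)) := by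
        rw [intervalIntegral.integral_sub hψt intervalIntegrable_const, hconst]
        all_goals field_simp
        all_goals ring
      rw [hsplit]
      have habs1 : |∫ u in (s - t)..(s + t), (G (Y, u) - G (Y, s))|
          ≤ ∫ u in (s - t)..(s + t), |G (Y, u) - G (Y, s)| :=
        intervalIntegral.abs_integral_le_integral_abs (by linarith)
      have hintabs : IntegrableOn (fun u => |G (Y, u) - G (Y, s)|)
          (Set.Icc (s - r) (s + r)) volume := by
        apply Integrable.abs
        apply Integrable.sub hψ.integrableOn
        exact integrableOn_const (by simp [Real.volume_Icc])
      have hmono : (∫ u in (s - t)..(s + t), |G (Y, u) - G (Y, s)|)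
          ≤ ∫ u in Set.Icc (s - r) (s + r), |G (Y, u) - G (Y, s)| := by
        rw [intervalIntegral.integral_of_le (by linarith), ← integral_Icc_eq_integral_Ioc]
        apply setIntegral_mono_set
        · exact hintabs
        · exact Eventually.of_forall (fun u => abs_nonneg _)
        · exact HasSubset.Subset.eventuallyLE
            (Set.Icc_subset_Icc (by linarith) (by linarith))
      have hintnn : 0 ≤ ∫ u in Set.Icc (s - r) (s + r), |G (Y, u) - G (Y, s)| :=
        setIntegral_nonneg measurableSet_Icc (fun u _ => abs_nonneg _)
      have hAm : a (m t) (Y, s)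
          = (2 * r)⁻¹ * ∫ u in Set.Icc (s - r) (s + r), |G (Y, u) - G (Y, s)| := by
        simp only [hadef]
        rw [setAverage_eq, measureReal_def, Real.volume_closedBall,
          ENNReal.toReal_ofReal (by linarith), Real.closedBall_eq_Icc, smul_eq_mul]
        simp [Real.norm_eq_abs]
        rfl
      calc |(1 / (2 * t)) * ∫ u in (s - t)..(s + t), (G (Y, u) - G (Y, s))|
          = (1 / (2 * t)) * |∫ u in (s - t)..(s + t), (G (Y, u) - G (Y, s))| := by
            rw [abs_mul, abs_of_nonneg (by positivity : (0:ℝ) ≤ 1 / (2 * t))]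
        _ ≤ (1 / (2 * t)) * ∫ u in Set.Icc (s - r) (s + r), |G (Y, u) - G (Y, s)| := by
            apply mul_le_mul_of_nonneg_left (le_trans habs1 hmono) (by positivity)
        _ ≤ (1 / r) * ∫ u in Set.Icc (s - r) (s + r), |G (Y, u) - G (Y, s)| := by
            apply mul_le_mul_of_nonneg_right _ hintnn
            rw [div_le_div_iff₀ (by positivity) hrpos]
            linarith
        _ = 2 * a (m t) (Y, s) := by
            rw [hAm]
            field_simp
    -- conclusion by squeezing
    have hmten : Tendsto (fun t : ℝ => m t) (𝓝[>] (0:ℝ)) atTop := by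
      apply (tendsto_sub_atTop_nat 2).comp
      apply tendsto_nat_ceil_atTop.comp
      have h8 : Tendsto (fun x : ℝ => x⁻¹) (𝓝[>] (0:ℝ)) atTop := tendsto_inv_nhdsGT_zero
      exact h8.congr (fun x => (one_div x).symm)
    have hA2 : Tendsto (fun t : ℝ => 2 * a (m t) (Y, s)) (𝓝[>] (0:ℝ)) (𝓝 0) := by
      have h7 := (hA'.comp hmten).const_mul (2:ℝ)
      simpa using h7
    rw [tendsto_iff_dist_tendsto_zero]
    simp only [Real.dist_eq]
    exact squeeze_zero' (Eventually.of_forall fun t => abs_nonneg _) hbound hA2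
  -- transfer a.e. Y to a.e. X
  rw [ae_iff]
  set Bad := {X : 𝔼 | ¬ Tendsto (fun t : ℝ => (1 / (2 * t)) *
      ∫ β in (-t)..t, F (X + β • v (Function.invFun (fun Z : 𝔼 => Z + s • v Z) X)))
    (𝓝[>] 0) (𝓝 (F X))} with hBad
  have hpre : volume ((fun Y : 𝔼 => Y + s • v Y) ⁻¹' Bad) = 0 := by
    rw [show ((fun Y : 𝔼 => Y + s • v Y) ⁻¹' Bad)
      = {Y : 𝔼 | ¬ Tendsto (fun t : ℝ => (1 / (2 * t)) *
          ∫ β in (-t)..t, F ((Y + s • v Y) + β • v (Function.invFun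
            (fun Z : 𝔼 => Z + s • v Z) (Y + s • v Y))))
        (𝓝[>] 0) (𝓝 (F (Y + s • v Y)))} from rfl]
    rw [← ae_iff]
    exact hgood
  have hfwd := zyg_forward_le hK hlip hc0 hcK hsc' Bad (v := v)
  rw [hpre, mul_zero] at hfwd
  exact le_antisymm hfwd (zero_le)
end
end

section
/- Let v : ℝ² → ℝ² be a unit Lipschitz vector field with constant K and 0 < T < 1/K. Then for every F ∈ L¹(ℝ²) and every λ > 0: (1/T)∫_{−T/2}^{T/2} μ{(x,y) ∈ ℝ² : sup_{0<t≤T/2} (1/(2t))∫_{−t}^{t} |F[(x,y) + β·v(S_s^{−1}(x,y))]| dβ > λ} ds ≤ (4π²(1+TK)²/(1−TK)²)·(1/λ)·∫_{ℝ²} |F| dμ. -/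
open MeasureTheory Real Set
open scoped ENNReal NNReal

local notation "E2" => EuclideanSpace ℝ (Fin 2)

lemma meas_image_equiv_le {α β : Type*} [MeasurableSpace α] [MeasurableSpace β] (e : α ≃ᵐ β)
    {μ : Measure α} {ν : Measure β} (h : MeasurePreserving e μ ν) (B : Set β) :
    μ (⇑e.symm '' B) ≤ ν B := by
  have h1 : ⇑e.symm '' B ⊆ ⇑e ⁻¹' (toMeasurable ν B) := by
    intro x hx
    rcases hx with ⟨b, hb, rfl⟩
    simp only [Set.mem_preimage, MeasurableEquiv.apply_symm_apply]
    exact subset_toMeasurable ν B hb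
  calc μ (⇑e.symm '' B) ≤ μ (⇑e ⁻¹' (toMeasurable ν B)) := measure_mono h1
    _ = ν (toMeasurable ν B) := h.measure_preimage (measurableSet_toMeasurable ν B).nullMeasurableSet
    _ = ν B := measure_toMeasurable B

lemma lip_image_le (f : E2 → E2) (L : ℝ≥0) (hf : LipschitzWith L f) (A : Set E2) :
    volume (f '' A) ≤ (2 * (L : ℝ≥0∞) ^ 2) * volume A := by
  classical
  set e := (MeasurableEquiv.toLp 2 (Fin 2 → ℝ)).symm with he
  have hmp : MeasurePreserving e volume volume :=
    EuclideanSpace.volume_preserving_symm_measurableEquiv_toLp (Fin 2)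
  have hcoe : ⇑e = (WithLp.ofLp : E2 → (Fin 2 → ℝ)) := rfl
  have hcoesymm : ⇑e.symm = (WithLp.toLp 2 : (Fin 2 → ℝ) → E2) :=
    rfl
  set c : ℝ≥0 := (Fintype.card (Fin 2) : ℝ≥0) ^ ((1:ℝ≥0∞) / 2).toReal with hc
  have hL1 : LipschitzWith 1 (⇑e) := by rw [hcoe]; exact PiLp.lipschitzWith_ofLp 2 _
  have hanti : AntilipschitzWith c (⇑e) := by
    rw [hcoe, hc]; exact PiLp.antilipschitzWith_ofLp 2 _
  have hL2 : LipschitzWith c (⇑e.symm) :=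
    hanti.to_rightInverse (e.toEquiv.rightInverse_symm)
  set g : (Fin 2 → ℝ) → (Fin 2 → ℝ) := ⇑e ∘ f ∘ ⇑e.symm with hg
  have hgl : LipschitzWith (1 * (L * c)) g := hL1.comp (hf.comp hL2)
  have him : f '' A = ⇑e.symm '' (g '' (⇑e '' A)) := by
    rw [hg, ← Set.image_comp, ← Set.image_comp]
    apply Set.image_congr
    intro x _
    simp [Function.comp]
  have hgbound : volume (g '' (⇑e '' A)) ≤ ((1 * (L * c) : ℝ≥0) : ℝ≥0∞) ^ (2:ℕ) * volume (⇑e '' A) := by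
    have h2 : (μH[(2:ℕ)] : Measure (Fin 2 → ℝ)) = volume := by
      simpa using (hausdorffMeasure_pi_real (ι := Fin 2))
    rw [← h2]
    have := hgl.hausdorffMeasure_image_le (show (0:ℝ) ≤ (2:ℕ) by norm_num) (⇑e '' A)
    simpa [ENNReal.rpow_natCast] using this
  have hA : volume (⇑e '' A) ≤ volume A := by
    have := meas_image_equiv_le e.symm hmp.symm A
    simpa using this
  have hcn : c ^ (2:ℕ) = (2:ℝ≥0) := by
    rw [hc, ← NNReal.rpow_natCast _ 2, ← NNReal.rpow_mul]
    norm_num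
  have hcn' : (c:ℝ≥0∞) ^ (2:ℕ) = 2 := by
    rw [← ENNReal.coe_pow, hcn]
    norm_cast
  have hconst : ((1 * (L * c) : ℝ≥0) : ℝ≥0∞) ^ (2:ℕ) = 2 * (L : ℝ≥0∞) ^ 2 := by
    push_cast
    rw [one_mul, mul_pow]
    rw [show ((c:ℝ≥0∞)) ^ (2:ℕ) = 2 from hcn']
    ring
  calc volume (f '' A) = volume (⇑e.symm '' (g '' (⇑e '' A))) := by rw [him]
    _ ≤ volume (g '' (⇑e '' A)) := meas_image_equiv_le e hmp _
    _ ≤ ((1 * (L * c) : ℝ≥0) : ℝ≥0∞) ^ (2:ℕ) * volume (⇑e '' A) := hgbound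
    _ ≤ ((1 * (L * c) : ℝ≥0) : ℝ≥0∞) ^ (2:ℕ) * volume A := by
        exact mul_le_mul_right hA _
    _ = (2 * (L : ℝ≥0∞) ^ 2) * volume A := by rw [hconst]

lemma hl_one_dim (ν : Measure ℝ) (T Λ : ℝ) (hT : 0 < T) (hΛ : 0 < Λ)
    (t : Set ℝ) (htsub : t ⊆ Set.Ioc (-(T/2)) (T/2))
    (h : ∀ s ∈ t, ∃ q : ℝ, 0 < q ∧ q ≤ T/2 ∧
      ENNReal.ofReal (2*q*Λ) < ν (Set.Ioc (s-q) (s+q))) :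
    volume t * ENNReal.ofReal Λ ≤ 4 * ν (Set.Icc (-T) T) := by
  classical
  choose! r hr0 hrT hrν using h
  obtain ⟨u, hut, hdisj, hcov⟩ :=
    Vitali.exists_disjoint_subfamily_covering_enlargement_closedBall t id r (T/2)
      (fun a ha => hrT a ha) (7/2) (by norm_num)
  -- countability of u
  have hcnt : u.Countable := by
    have hdisj' : Pairwise (Function.onFun Disjoint fun i : u => Metric.closedBall (id i.1) (r i.1)) := by
      intro i j hij
      exact hdisj i.2 j.2 (Subtype.coe_injective.ne hij)
    have := MeasureTheory.Measure.countable_meas_pos_of_disjoint_iUnion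
      (μ := (volume : Measure ℝ))
      (As := fun i : u => Metric.closedBall (id i.1) (r i.1))
      (fun i => measurableSet_closedBall) hdisj'
    have huniv : {i : u | 0 < volume (Metric.closedBall (id i.1) (r i.1))} = Set.univ := by
      ext i
      simp only [Set.mem_setOf_eq, Set.mem_univ, iff_true]
      rw [Real.volume_closedBall]
      have : 0 < r i.1 := hr0 i.1 (hut i.2)
      exact ENNReal.ofReal_pos.2 (by linarith)
    rw [huniv] at this
    rw [← Set.countable_coe_iff]
    exact Set.countable_univ_iff.mp this
  -- cover of t
  have hcover : t ⊆ ⋃ b ∈ u, Metric.closedBall b ((7/2) * r b) := by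
    intro s hs
    obtain ⟨b, hb, hsub⟩ := hcov s hs
    refine Set.mem_biUnion hb ?_
    exact hsub (Metric.mem_closedBall_self (le_of_lt (hr0 s hs)))
  have hIoc_sub : ∀ b ∈ u, Set.Ioc (b - r b) (b + r b) ⊆ Metric.closedBall b (r b) := by
    intro b _
    rw [Real.closedBall_eq_Icc]
    exact Set.Ioc_subset_Icc_self
  have key : ∀ b ∈ u, ENNReal.ofReal (7 * r b) * ENNReal.ofReal Λ
      ≤ ENNReal.ofReal (7/2) * ν (Set.Ioc (b - r b) (b + r b)) := by
    intro b hb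
    have hrb0 : 0 < r b := hr0 b (hut hb)
    rw [← ENNReal.ofReal_mul (by linarith)]
    have h1 : 7 * r b * Λ = (7/2) * (2 * r b * Λ) := by ring
    rw [h1, ENNReal.ofReal_mul (by norm_num)]
    exact mul_le_mul_right (le_of_lt (hrν b (hut hb))) _
  calc volume t * ENNReal.ofReal Λ
      ≤ volume (⋃ b ∈ u, Metric.closedBall b ((7/2) * r b)) * ENNReal.ofReal Λ :=
        mul_le_mul_left (measure_mono hcover) _
    _ ≤ (∑' b : u, volume (Metric.closedBall b.1 ((7/2) * r b.1))) * ENNReal.ofReal Λ :=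
        mul_le_mul_left (measure_biUnion_le _ hcnt _) _
    _ = ∑' b : u, volume (Metric.closedBall b.1 ((7/2) * r b.1)) * ENNReal.ofReal Λ :=
        ENNReal.tsum_mul_right.symm
    _ = ∑' b : u, ENNReal.ofReal (7 * r b.1) * ENNReal.ofReal Λ := by
        congr 1; funext b; rw [Real.volume_closedBall]; congr 2; ring
    _ ≤ ∑' b : u, ENNReal.ofReal (7/2) * ν (Set.Ioc (b.1 - r b.1) (b.1 + r b.1)) :=
        ENNReal.tsum_le_tsum (fun b => key b.1 b.2)
    _ = ENNReal.ofReal (7/2) * ∑' b : u, ν (Set.Ioc (b.1 - r b.1) (b.1 + r b.1)) :=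
        ENNReal.tsum_mul_left
    _ = ENNReal.ofReal (7/2) * ν (⋃ b ∈ u, Set.Ioc (b - r b) (b + r b)) := by
        rw [measure_biUnion hcnt _ (fun b _ => measurableSet_Ioc)]
        exact hdisj.mono (fun b => by
          show Set.Ioc (b - r b) (b + r b) ⊆ Metric.closedBall (id b) (r b)
          rw [id, Real.closedBall_eq_Icc]
          exact Set.Ioc_subset_Icc_self)
    _ ≤ ENNReal.ofReal (7/2) * ν (Set.Icc (-T) T) := by
        refine mul_le_mul_right (measure_mono ?_) _
        refine Set.iUnion₂_subset (fun b hb => ?_)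
        have hbt := htsub (hut hb)
        have hrb := hrT b (hut hb)
        have hrb0 := hr0 b (hut hb)
        intro x hx
        simp only [Set.mem_Ioc] at hx
        simp only [Set.mem_Icc]
        constructor
        · have := hbt.1; linarith [hx.1]
        · have := hbt.2; linarith [hx.2]
    _ ≤ 4 * ν (Set.Icc (-T) T) := by
        refine mul_le_mul_left ?_ _
        calc ENNReal.ofReal (7/2) ≤ ENNReal.ofReal 4 := ENNReal.ofReal_le_ofReal (by norm_num)
          _ = 4 := by norm_num

lemma exists_rat_radius (ν : Measure ℝ) (hν : ∀ x : ℝ, ν {x} = 0) (s t Λ' : ℝ)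
    (ht : 0 < t) (hΛ' : 0 ≤ Λ')
    (hlt : ENNReal.ofReal (2*t*Λ') < ν (Set.Ioc (s-t) (s+t))) :
    ∃ q : ℚ, 0 < (q:ℝ) ∧ (q:ℝ) < t ∧
      ENNReal.ofReal (2*q*Λ') < ν (Set.Ioc (s-q) (s+q)) := by
  set tn : ℕ → ℝ := fun n => t - t/(n+2) with htn
  have htn_pos : ∀ n, 0 < tn n := by
    intro n
    have h1 : t/(n+2) ≤ t/2 := by
      apply div_le_div_of_nonneg_left ht.le (by norm_num)
      · push_cast; linarith [Nat.cast_nonneg (α := ℝ) n]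
    simp only [htn]
    linarith [half_lt_self ht]
  have htn_lt : ∀ n, tn n < t := by
    intro n
    have : 0 < t/(n+2) := by positivity
    simp only [htn]; linarith
  have hmono : Monotone (fun n => Set.Ioc (s - tn n) (s + tn n)) := by
    intro m n hmn
    have h1 : tn m ≤ tn n := by
      simp only [htn]
      have : t/(n+2) ≤ t/(m+2) := by
        apply div_le_div_of_nonneg_left ht.le (by positivity)
        push_cast; have := (Nat.cast_le (α := ℝ)).2 hmn; linarith
      linarith
    exact Set.Ioc_subset_Ioc (by linarith) (by linarith)
  have hunion : (⋃ n, Set.Ioc (s - tn n) (s + tn n)) = Set.Ioo (s - t) (s + t) := by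
    ext x
    simp only [Set.mem_iUnion, Set.mem_Ioc, Set.mem_Ioo]
    constructor
    · rintro ⟨n, h1, h2⟩
      exact ⟨by linarith [htn_lt n], by linarith [htn_lt n]⟩
    · rintro ⟨h1, h2⟩
      have hd : 0 < t - |x - s| := by
        have h := abs_sub_lt_iff.2 ⟨(by linarith : x - s < t), (by linarith : s - x < t)⟩
        linarith
      obtain ⟨n, hn⟩ := exists_nat_gt (t / (t - |x - s|))
      refine ⟨n, ?_, ?_⟩
      · have hxs : |x - s| < tn n := by
          have h2' : t / (n+2) < t - |x - s| := by
            rw [div_lt_iff₀ (by positivity)]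
            have h3 : t / (t - |x - s|) < (n:ℝ) + 2 := by linarith [hn]
            calc t = (t / (t - |x-s|)) * (t - |x-s|) := by field_simp
              _ < ((n:ℝ)+2) * (t - |x-s|) := mul_lt_mul_of_pos_right h3 hd
              _ = (t - |x-s|) * ((n:ℝ)+2) := mul_comm _ _
          simp only [htn]; linarith
        have := abs_lt.1 hxs
        linarith [this.1]
      · have hxs : |x - s| < tn n := by
          have h2' : t / (n+2) < t - |x - s| := by
            rw [div_lt_iff₀ (by positivity)]
            have h3 : t / (t - |x - s|) < (n:ℝ) + 2 := by linarith [hn]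
            calc t = (t / (t - |x-s|)) * (t - |x-s|) := by field_simp
              _ < ((n:ℝ)+2) * (t - |x-s|) := mul_lt_mul_of_pos_right h3 hd
              _ = (t - |x-s|) * ((n:ℝ)+2) := mul_comm _ _
          simp only [htn]; linarith
        have := abs_lt.1 hxs
        linarith [this.2]
  have hIoo : ENNReal.ofReal (2*t*Λ') < ν (Set.Ioo (s-t) (s+t)) := by
    have h1 : ν (Set.Ioc (s-t) (s+t)) ≤ ν (Set.Ioo (s-t) (s+t)) := by
      have : Set.Ioc (s-t) (s+t) ⊆ Set.Ioo (s-t) (s+t) ∪ {s+t} := by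
        intro x hx
        rcases eq_or_lt_of_le hx.2 with h | h
        · exact Or.inr (by simp [h])
        · exact Or.inl ⟨hx.1, h⟩
      calc ν (Set.Ioc (s-t) (s+t)) ≤ ν (Set.Ioo (s-t) (s+t) ∪ {s+t}) := measure_mono this
        _ ≤ ν (Set.Ioo (s-t) (s+t)) + ν {s+t} := measure_union_le _ _
        _ = ν (Set.Ioo (s-t) (s+t)) := by rw [hν]; simp
    exact lt_of_lt_of_le hlt h1
  rw [← hunion, hmono.measure_iUnion] at hIoo
  obtain ⟨n, hn⟩ := lt_iSup_iff.1 hIoo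
  obtain ⟨q, hq1, hq2⟩ := exists_rat_btwn (htn_lt n)
  refine ⟨q, lt_trans (htn_pos n) hq1, hq2, ?_⟩
  calc ENNReal.ofReal (2*q*Λ') ≤ ENNReal.ofReal (2*t*Λ') := by
        apply ENNReal.ofReal_le_ofReal
        nlinarith [hq2, hΛ']
    _ < ν (Set.Ioc (s - tn n) (s + tn n)) := hn
    _ ≤ ν (Set.Ioc (s - q) (s + q)) := by
        apply measure_mono
        exact Set.Ioc_subset_Ioc (by linarith) (by linarith)

lemma S_lip (v : E2 → E2) (K T : ℝ) (hK : 0 < K) (hlip : ∀ X Y, ‖v X - v Y‖ ≤ K * ‖X - Y‖)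
    (hT0 : 0 < T) (s : ℝ) (hs : |s| ≤ T) :
    LipschitzWith (Real.toNNReal (1 + T*K)) (fun Y => Y + s • v Y) := by
  apply LipschitzWith.of_dist_le_mul
  intro X Y
  rw [dist_eq_norm, dist_eq_norm, Real.coe_toNNReal _ (by nlinarith)]
  have h1 : X + s • v X - (Y + s • v Y) = (X - Y) + s • (v X - v Y) := by
    rw [smul_sub]; abel
  show ‖X + s • v X - (Y + s • v Y)‖ ≤ _
  rw [h1]
  have h2 : ‖s • (v X - v Y)‖ ≤ |s| * (K * ‖X - Y‖) := by
    rw [norm_smul, Real.norm_eq_abs]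
    exact mul_le_mul_of_nonneg_left (hlip X Y) (abs_nonneg s)
  have h3 : |s| * (K * ‖X - Y‖) ≤ T * K * ‖X - Y‖ := by
    nlinarith [mul_nonneg (mul_nonneg (sub_nonneg.2 hs) hK.le) (norm_nonneg (X - Y))]
  calc ‖(X - Y) + s • (v X - v Y)‖ ≤ ‖X - Y‖ + ‖s • (v X - v Y)‖ := norm_add_le _ _
    _ ≤ ‖X - Y‖ + T * K * ‖X - Y‖ := by linarith
    _ = (1 + T*K) * ‖X - Y‖ := by ring

lemma S_low (v : E2 → E2) (K T : ℝ) (hK : 0 < K) (hlip : ∀ X Y, ‖v X - v Y‖ ≤ K * ‖X - Y‖)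
    (s : ℝ) (hs : |s| ≤ T) (X Y : E2) :
    (1 - T*K) * ‖X - Y‖ ≤ ‖(X + s • v X) - (Y + s • v Y)‖ := by
  have h1 : X + s • v X - (Y + s • v Y) = (X - Y) + s • (v X - v Y) := by
    rw [smul_sub]; abel
  rw [h1]
  have h2 : ‖s • (v X - v Y)‖ ≤ T * K * ‖X - Y‖ := by
    rw [norm_smul, Real.norm_eq_abs]
    have ha : |s| * ‖v X - v Y‖ ≤ |s| * (K * ‖X - Y‖) :=
      mul_le_mul_of_nonneg_left (hlip X Y) (abs_nonneg s)
    have h3 : |s| * (K * ‖X - Y‖) ≤ T * K * ‖X - Y‖ := by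
      nlinarith [mul_nonneg (mul_nonneg (sub_nonneg.2 hs) hK.le) (norm_nonneg (X - Y))]
    linarith
  have h4 : ‖X - Y‖ - ‖s • (v X - v Y)‖ ≤ ‖(X - Y) + s • (v X - v Y)‖ := by
    have := norm_add_le ((X - Y) + s • (v X - v Y)) (-(s • (v X - v Y)))
    simp only [add_neg_cancel_right, norm_neg] at this
    linarith
  nlinarith

lemma S_inj (v : E2 → E2) (K T : ℝ) (hK : 0 < K) (hlip : ∀ X Y, ‖v X - v Y‖ ≤ K * ‖X - Y‖)
    (hTK : T * K < 1) (s : ℝ) (hs : |s| ≤ T) :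
    Function.Injective (fun Y => Y + s • v Y) := by
  intro X Y h
  have hl := S_low v K T hK hlip s hs X Y
  simp only at h
  rw [h] at hl
  simp only [sub_self, norm_zero] at hl
  have h1 : ‖X - Y‖ = 0 := by nlinarith [norm_nonneg (X - Y)]
  rwa [norm_sub_eq_zero_iff] at h1

lemma S_surj (v : E2 → E2) (K T : ℝ) (hK : 0 < K) (hlip : ∀ X Y, ‖v X - v Y‖ ≤ K * ‖X - Y‖)
    (hTK : T * K < 1) (hT0 : 0 < T) (s : ℝ) (hs : |s| ≤ T) :
    Function.Surjective (fun Y => Y + s • v Y) := by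
  intro X
  set φ : E2 → E2 := fun Y => X - s • v Y with hφ
  have hφlip : LipschitzWith (Real.toNNReal (T*K)) φ := by
    apply LipschitzWith.of_dist_le_mul
    intro Y Z
    rw [dist_eq_norm, dist_eq_norm, Real.coe_toNNReal _ (by nlinarith)]
    have h1 : φ Y - φ Z = s • (v Z - v Y) := by
      rw [hφ]; simp only [smul_sub]; abel
    rw [h1, norm_smul, Real.norm_eq_abs]
    have h3 : ‖Z - Y‖ = ‖Y - Z‖ := norm_sub_rev _ _
    have h2 := hlip Z Y
    rw [h3] at h2
    nlinarith [abs_nonneg s, norm_nonneg (Y - Z), norm_nonneg (v Z - v Y)]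
  have hlt : Real.toNNReal (T*K) < 1 := by
    rw [← Real.toNNReal_one]
    exact (Real.toNNReal_lt_toNNReal_iff one_pos).2 hTK
  have hcontr : ContractingWith (Real.toNNReal (T*K)) φ := ⟨hlt, hφlip⟩
  obtain ⟨Y, hY, -⟩ := hcontr.exists_fixedPoint X (edist_ne_top _ _)
  refine ⟨Y, ?_⟩
  have hfix : X - s • v Y = Y := hY
  show Y + s • v Y = X
  calc Y + s • v Y = (X - s • v Y) + s • v Y := by rw [hfix]
    _ = X := by abel

lemma S_invFun_lip (v : E2 → E2) (K T : ℝ) (hK : 0 < K)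
    (hlip : ∀ X Y, ‖v X - v Y‖ ≤ K * ‖X - Y‖)
    (hTK : T * K < 1) (hT0 : 0 < T) (s : ℝ) (hs : |s| ≤ T) :
    LipschitzWith (Real.toNNReal ((1 - T*K)⁻¹)) (Function.invFun (fun Y => Y + s • v Y)) := by
  have h1TK : (0:ℝ) < 1 - T*K := by linarith
  apply LipschitzWith.of_dist_le_mul
  intro a b
  have hri := Function.rightInverse_invFun (S_surj v K T hK hlip hTK hT0 s hs)
  set ia := Function.invFun (fun Y => Y + s • v Y) a with hia
  set ib := Function.invFun (fun Y => Y + s • v Y) b with hib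
  have hlow := S_low v K T hK hlip s hs ia ib
  have ha : ia + s • v ia = a := hri a
  have hb : ib + s • v ib = b := hri b
  rw [ha, hb] at hlow
  rw [dist_eq_norm, dist_eq_norm, Real.coe_toNNReal _ (by positivity)]
  rw [inv_mul_eq_div, le_div_iff₀ h1TK]
  nlinarith [hlow]

lemma S_preimage_eq (v : E2 → E2) (K T : ℝ) (hK : 0 < K)
    (hlip : ∀ X Y, ‖v X - v Y‖ ≤ K * ‖X - Y‖)
    (hTK : T * K < 1) (hT0 : 0 < T) (s : ℝ) (hs : |s| ≤ T) (A : Set E2) :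
    (fun Y => Y + s • v Y) ⁻¹' A = Function.invFun (fun Y => Y + s • v Y) '' A := by
  have hli := Function.leftInverse_invFun (S_inj v K T hK hlip hTK s hs)
  have hri := Function.rightInverse_invFun (S_surj v K T hK hlip hTK hT0 s hs)
  ext x
  simp only [Set.mem_preimage, Set.mem_image]
  constructor
  · intro hx
    exact ⟨x + s • v x, hx, hli x⟩
  · rintro ⟨a, ha, rfl⟩
    show Function.invFun (fun Y => Y + s • v Y) a + _ • _ ∈ A
    have := hri a
    simp only at this
    rw [this]
    exact ha

lemma v_continuous (v : E2 → E2) (K : ℝ) (hlip : ∀ X Y, ‖v X - v Y‖ ≤ K * ‖X - Y‖)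
    (hK : 0 < K) : Continuous v := by
  have : LipschitzWith (Real.toNNReal K) v := by
    apply LipschitzWith.of_dist_le_mul
    intro X Y
    rw [dist_eq_norm, dist_eq_norm, Real.coe_toNNReal _ hK.le]
    exact hlip X Y
  exact this.continuous

lemma S_map_le (v : E2 → E2) (K T : ℝ) (hK : 0 < K)
    (hlip : ∀ X Y, ‖v X - v Y‖ ≤ K * ‖X - Y‖)
    (hTK : T * K < 1) (hT0 : 0 < T) (s : ℝ) (hs : |s| ≤ T) :
    Measure.map (fun Y => Y + s • v Y) volume ≤
      (2 * ((Real.toNNReal ((1 - T*K)⁻¹) : ℝ≥0) : ℝ≥0∞) ^ 2) • volume := by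
  have hcont : Continuous (fun Y : E2 => Y + s • v Y) :=
    continuous_id.add ((v_continuous v K hlip hK).const_smul s)
  rw [Measure.le_iff]
  intro A hA
  rw [Measure.map_apply hcont.measurable hA,
    S_preimage_eq v K T hK hlip hTK hT0 s hs A]
  calc volume (Function.invFun (fun Y => Y + s • v Y) '' A)
      ≤ (2 * ((Real.toNNReal ((1 - T*K)⁻¹) : ℝ≥0) : ℝ≥0∞) ^ 2) * volume A :=
        lip_image_le _ _ (S_invFun_lip v K T hK hlip hTK hT0 s hs) A
    _ = _ := by rw [Measure.smul_apply, smul_eq_mul]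

lemma S_pullback_lintegral (v : E2 → E2) (K T : ℝ) (hK : 0 < K)
    (hlip : ∀ X Y, ‖v X - v Y‖ ≤ K * ‖X - Y‖)
    (hTK : T * K < 1) (hT0 : 0 < T) (s : ℝ) (hs : |s| ≤ T)
    (G : E2 → ℝ≥0∞) (hG : Measurable G) :
    ∫⁻ Y, G (Y + s • v Y) ≤
      (2 * ((Real.toNNReal ((1 - T*K)⁻¹) : ℝ≥0) : ℝ≥0∞) ^ 2) * ∫⁻ X, G X := by
  have hcont : Continuous (fun Y : E2 => Y + s • v Y) :=
    continuous_id.add ((v_continuous v K hlip hK).const_smul s)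
  have h1 : ∫⁻ Y, G (Y + s • v Y) = ∫⁻ X, G X ∂(Measure.map (fun Y => Y + s • v Y) volume) :=
    (lintegral_map hG hcont.measurable).symm
  rw [h1]
  calc ∫⁻ X, G X ∂(Measure.map (fun Y => Y + s • v Y) volume)
      ≤ ∫⁻ X, G X ∂((2 * ((Real.toNNReal ((1 - T*K)⁻¹) : ℝ≥0) : ℝ≥0∞) ^ 2) • volume) :=
        lintegral_mono' (S_map_le v K T hK hlip hTK hT0 s hs) (le_refl _)
    _ = _ := by rw [lintegral_smul_measure, smul_eq_mul]

set_option maxHeartbeats 2000000 in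
theorem zygmund_maximal_inequality
    (v : EuclideanSpace ℝ (Fin 2) → EuclideanSpace ℝ (Fin 2)) (K T : ℝ)
    (hK : 0 < K) (hlip : ∀ X Y, ‖v X - v Y‖ ≤ K * ‖X - Y‖)
    (hunit : ∀ X, ‖v X‖ = 1) (hT0 : 0 < T) (hT : T < 1 / K)
    (F : EuclideanSpace ℝ (Fin 2) → ℝ) (hF : Integrable F volume)
    (Λ : ℝ) (hΛ : 0 < Λ) :
    (1 / T) * ∫ s in (-(T / 2))..(T / 2),
        (volume {X : EuclideanSpace ℝ (Fin 2) |
          ∃ t ∈ Set.Ioc (0 : ℝ) (T / 2),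
            (1 / (2 * t)) * ∫ β in (-t)..t,
              |F (X + β • v (Function.invFun (fun Y => Y + s • v Y) X))| > Λ}).toReal
      ≤ (4 * π ^ 2 * (1 + T * K) ^ 2 / (1 - T * K) ^ 2) * (1 / Λ) * ∫ X, |F X| := by
  classical
  have hTK : T * K < 1 := by rwa [lt_div_iff₀ hK] at hT
  have h1TK : (0:ℝ) < 1 - T*K := by linarith
  set Es : ℝ → Set E2 := fun s => {X : E2 |
      ∃ t ∈ Set.Ioc (0 : ℝ) (T / 2),
        (1 / (2 * t)) * ∫ β in (-t)..t,
          |F (X + β • v (Function.invFun (fun Y => Y + s • v Y) X))| > Λ} with hEs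
  set win : Set ℝ := Set.Ioc (-(T/2)) (T/2) with hwin
  -- measurable representative
  set F₀ : E2 → ℝ := hF.1.mk F with hF₀
  have hF₀m : StronglyMeasurable F₀ := hF.1.stronglyMeasurable_mk
  have hFeq : F =ᵐ[volume] F₀ := hF.1.ae_eq_mk
  have hvc : Continuous v := v_continuous v K hlip hK
  have hmapc : Continuous fun p : E2 × ℝ => p.1 + p.2 • v p.1 :=
    continuous_fst.add (continuous_snd.smul (hvc.comp continuous_fst))
  have hH : Measurable fun p : E2 × ℝ => (‖F₀ (p.1 + p.2 • v p.1)‖₊ : ℝ≥0∞) :=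
    (hF₀m.measurable.comp hmapc.measurable).enorm
  set ν : E2 → Measure ℝ :=
    fun Y => volume.withDensity fun u => (‖F₀ (Y + u • v Y)‖₊ : ℝ≥0∞) with hν
  have hν_apply : ∀ (Y : E2) (J : Set ℝ), MeasurableSet J →
      ν Y J = ∫⁻ u in J, (‖F₀ (Y + u • v Y)‖₊ : ℝ≥0∞) := fun Y J hJ =>
    withDensity_apply _ hJ
  have hν_single : ∀ (Y : E2) (x : ℝ), ν Y {x} = 0 := by
    intro Y x
    rw [hν_apply Y {x} (measurableSet_singleton x)]
    exact setLIntegral_measure_zero _ _ (measure_singleton x)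
  set A : Set (ℝ × E2) := {p | ∃ q : ℚ, 0 < (q:ℝ) ∧ (q:ℝ) ≤ T/2 ∧
      ENNReal.ofReal (2*q*Λ) < ν p.2 (Set.Ioc (p.1 - q) (p.1 + q))} with hA_def
  -- measurability of A
  have hGq : ∀ q : ℚ, Measurable fun p : ℝ × E2 =>
      ν p.2 (Set.Ioc (p.1 - (q:ℝ)) (p.1 + (q:ℝ))) := by
    intro q
    have heq : ∀ p : ℝ × E2, ν p.2 (Set.Ioc (p.1 - (q:ℝ)) (p.1 + (q:ℝ)))
        = ∫⁻ u, (Set.Ioc (p.1 - (q:ℝ)) (p.1 + (q:ℝ))).indicator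
            (fun u => (‖F₀ (p.2 + u • v p.2)‖₊ : ℝ≥0∞)) u := by
      intro p
      rw [hν_apply _ _ measurableSet_Ioc, lintegral_indicator measurableSet_Ioc]
    simp only [heq]
    apply Measurable.lintegral_prod_right'
      (f := fun r : (ℝ × E2) × ℝ => (Set.Ioc (r.1.1 - (q:ℝ)) (r.1.1 + (q:ℝ))).indicator
        (fun u => (‖F₀ (r.1.2 + u • v r.1.2)‖₊ : ℝ≥0∞)) r.2)
    have hmem : MeasurableSet {r : (ℝ × E2) × ℝ | r.1.1 - (q:ℝ) < r.2 ∧ r.2 ≤ r.1.1 + (q:ℝ)} := by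
      apply MeasurableSet.inter
      · exact measurableSet_lt (measurable_fst.fst.sub measurable_const) measurable_snd
      · exact measurableSet_le measurable_snd (measurable_fst.fst.add measurable_const)
    have : (fun r : (ℝ × E2) × ℝ => (Set.Ioc (r.1.1 - (q:ℝ)) (r.1.1 + (q:ℝ))).indicator
        (fun u => (‖F₀ (r.1.2 + u • v r.1.2)‖₊ : ℝ≥0∞)) r.2)
        = fun r : (ℝ × E2) × ℝ => if r.1.1 - (q:ℝ) < r.2 ∧ r.2 ≤ r.1.1 + (q:ℝ)
            then (‖F₀ (r.1.2 + r.2 • v r.1.2)‖₊ : ℝ≥0∞) else 0 := by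
      funext r
      rw [Set.indicator_apply]
      simp [Set.mem_Ioc]
    rw [this]
    apply Measurable.ite hmem
    · exact hH.comp ((measurable_fst.snd).prodMk measurable_snd)
    · exact measurable_const
  have hA : MeasurableSet A := by
    have : A = ⋃ q : ℚ, ({p : ℝ × E2 | 0 < (q:ℝ) ∧ (q:ℝ) ≤ T/2} ∩
        {p : ℝ × E2 | ENNReal.ofReal (2*q*Λ) < ν p.2 (Set.Ioc (p.1 - q) (p.1 + q))}) := by
      ext p
      simp only [hA_def, Set.mem_setOf_eq, Set.mem_iUnion, Set.mem_inter_iff]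
      constructor
      · rintro ⟨q, h1, h2, h3⟩; exact ⟨q, ⟨h1, h2⟩, h3⟩
      · rintro ⟨q, ⟨h1, h2⟩, h3⟩; exact ⟨q, h1, h2, h3⟩
    rw [this]
    refine MeasurableSet.iUnion fun q => ?_
    refine MeasurableSet.inter ?_ ?_
    · by_cases hq : 0 < (q:ℝ) ∧ (q:ℝ) ≤ T/2
      · simp only [hq]; simp
      · have : {p : ℝ × E2 | 0 < (q:ℝ) ∧ (q:ℝ) ≤ T/2} = ∅ := by
          ext p; simp only [Set.mem_setOf_eq, Set.mem_empty_iff_false, iff_false]; exact hq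
        rw [this]; exact MeasurableSet.empty
    · exact measurableSet_lt measurable_const (hGq q)
  -- a.e. Y, F = F₀ along the line for u in [-T,T]
  have hZae : ∀ᵐ Y ∂(volume : Measure E2),
      ∀ᵐ u ∂(volume.restrict (Set.Icc (-T) T)), F (Y + u • v Y) = F₀ (Y + u • v Y) := by
    set N : Set E2 := toMeasurable volume {X | F X ≠ F₀ X} with hN
    have hNmeas : MeasurableSet N := measurableSet_toMeasurable _ _
    have hNnull : volume N = 0 := by
      rw [hN, measure_toMeasurable]
      exact ae_iff.1 hFeq
    set Q : Set (E2 × ℝ) := {p | p.1 + p.2 • v p.1 ∈ N} with hQ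
    have hQmeas : MeasurableSet Q := hmapc.measurable hNmeas
    have hQnull : (volume.prod (volume.restrict (Set.Icc (-T) T))) Q = 0 := by
      rw [Measure.prod_apply_symm hQmeas]
      have hz : ∀ᵐ u ∂(volume.restrict (Set.Icc (-T) T)),
          volume ((fun Y : E2 => (Y, u)) ⁻¹' Q) = 0 := by
        filter_upwards [ae_restrict_mem measurableSet_Icc] with u hu
        have hus : |u| ≤ T := abs_le.2 ⟨hu.1, hu.2⟩
        have hpre : ((fun Y : E2 => (Y, u)) ⁻¹' Q) = (fun Y : E2 => Y + u • v Y) ⁻¹' N := rfl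
        rw [hpre, S_preimage_eq v K T hK hlip hTK hT0 u hus N]
        have hb := lip_image_le _ _ (S_invFun_lip v K T hK hlip hTK hT0 u hus) N
        rw [hNnull, mul_zero] at hb
        exact le_antisymm hb (by simp)
      calc (∫⁻ u, volume ((fun Y : E2 => (Y, u)) ⁻¹' Q)
              ∂(volume.restrict (Set.Icc (-T) T)))
          = ∫⁻ _, 0 ∂(volume.restrict (Set.Icc (-T) T)) := lintegral_congr_ae hz
        _ = 0 := lintegral_zero
    have hsec := MeasureTheory.Measure.measure_ae_null_of_prod_null hQnull
    filter_upwards [hsec] with Y hY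
    have hae0 : ∀ᵐ u ∂(volume.restrict (Set.Icc (-T) T)), (Y, u) ∉ Q := by
      rw [ae_iff]
      simp only [not_not]; exact hY
    filter_upwards [hae0] with u hu
    by_contra hne
    exact hu (subset_toMeasurable _ _ hne)
  -- key pointwise claim
  have key : ∀ s ∈ win, ∀ Y : E2,
      (∀ᵐ u ∂(volume.restrict (Set.Icc (-T) T)), F (Y + u • v Y) = F₀ (Y + u • v Y)) →
      Y + s • v Y ∈ Es s → (s, Y) ∈ A := by
    intro s hs Y hae hmem
    have hsT : |s| ≤ T := by
      rw [hwin, Set.mem_Ioc] at hs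
      rw [abs_le]; constructor <;> [linarith [hs.1]; linarith [hs.2]]
    obtain ⟨t, ht, hgt⟩ := hmem
    have hinv : Function.invFun (fun Y' : E2 => Y' + s • v Y') (Y + s • v Y) = Y :=
      Function.leftInverse_invFun (S_inj v K T hK hlip hTK s hsT) Y
    rw [hinv] at hgt
    have hrw : ∀ β : ℝ, Y + s • v Y + β • v Y = Y + (s + β) • v Y := by
      intro β; rw [add_smul]; abel
    simp only [hrw] at hgt
    have hcomp : (∫ β in (-t)..t, |F (Y + (s + β) • v Y)|)
        = ∫ u in (s + -t)..(s + t), |F (Y + u • v Y)| :=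
      intervalIntegral.integral_comp_add_left (fun u => |F (Y + u • v Y)|) s
    rw [hcomp, show s + -t = s - t by ring] at hgt
    have hle : s - t ≤ s + t := by linarith [ht.1]
    rw [intervalIntegral.integral_of_le hle] at hgt
    have hsub : Set.Ioc (s - t) (s + t) ⊆ Set.Icc (-T) T := by
      intro x hx
      rw [hwin, Set.mem_Ioc] at hs
      have h1 := ht.2
      have h2 := hx.1
      have h3 := hx.2
      constructor
      · simp only [Set.mem_Ioc] at *
        linarith [hs.1]
      · simp only [Set.mem_Ioc] at *
        linarith [hs.2]
    have hae' : ∀ᵐ u ∂(volume.restrict (Set.Ioc (s-t) (s+t))),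
        F (Y + u • v Y) = F₀ (Y + u • v Y) := ae_restrict_of_ae_restrict_of_subset hsub hae
    rw [integral_congr_ae (hae'.mono fun u hu => by rw [hu])] at hgt
    have hcl : Continuous fun u : ℝ => Y + u • v Y :=
      continuous_const.add (continuous_id.smul continuous_const)
    have hmeas_line : AEStronglyMeasurable (fun u : ℝ => |F₀ (Y + u • v Y)|)
        (volume.restrict (Set.Ioc (s-t) (s+t))) :=
      ((hF₀m.measurable.comp hcl.measurable).abs).aestronglyMeasurable
    rw [integral_eq_lintegral_of_nonneg_ae
      (Filter.Eventually.of_forall fun u => abs_nonneg _) hmeas_line] at hgt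
    have hl_eq : (∫⁻ u in Set.Ioc (s-t) (s+t), ENNReal.ofReal |F₀ (Y + u • v Y)|)
        = ν Y (Set.Ioc (s-t) (s+t)) := by
      rw [hν_apply _ _ measurableSet_Ioc]
      exact lintegral_congr fun u => (Real.enorm_eq_ofReal_abs _).symm
    rw [hl_eq] at hgt
    have h2t : (0:ℝ) < 2 * t := by linarith [ht.1]
    have hΛt : Λ * (2*t) < (ν Y (Set.Ioc (s-t) (s+t))).toReal := by
      rw [gt_iff_lt, one_div, inv_mul_eq_div, lt_div_iff₀ h2t] at hgt
      linarith [hgt]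
    have hofr : ENNReal.ofReal (2*t*Λ) < ν Y (Set.Ioc (s-t) (s+t)) := by
      rcases eq_or_ne (ν Y (Set.Ioc (s-t) (s+t))) ⊤ with htop | htop
      · rw [htop]; exact ENNReal.ofReal_lt_top
      · have h0 : 0 < (ν Y (Set.Ioc (s-t) (s+t))).toReal := by nlinarith [ht.1]
        rw [← ENNReal.ofReal_toReal htop, ENNReal.ofReal_lt_ofReal_iff h0]
        nlinarith
    obtain ⟨q, hq0, hqt, hqν⟩ := exists_rat_radius (ν Y) (hν_single Y) s t Λ ht.1 hΛ.le hofr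
    exact ⟨q, hq0, by linarith [ht.2, hqt], hqν⟩
  -- constants
  set c₁ : ℝ≥0∞ := 2 * ((Real.toNNReal (1 + T*K) : ℝ≥0) : ℝ≥0∞)^2 with hc₁def
  set c₂ : ℝ≥0∞ := 2 * ((Real.toNNReal ((1 - T*K)⁻¹) : ℝ≥0) : ℝ≥0∞)^2 with hc₂def
  have hc₁top : c₁ ≠ ⊤ := by
    rw [hc₁def]
    exact ENNReal.mul_ne_top (by norm_num) (by simp [ENNReal.pow_ne_top, ENNReal.coe_ne_top])
  have hc₂top : c₂ ≠ ⊤ := by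
    rw [hc₂def]
    exact ENNReal.mul_ne_top (by norm_num) (by simp [ENNReal.pow_ne_top, ENNReal.coe_ne_top])
  have hΛ0 : ENNReal.ofReal Λ ≠ 0 := by
    simp only [ne_eq, ENNReal.ofReal_eq_zero, not_le]
    exact hΛ
  set Zset : Set E2 := {Y : E2 | ¬ ∀ᵐ u ∂(volume.restrict (Set.Icc (-T) T)),
      F (Y + u • v Y) = F₀ (Y + u • v Y)} with hZset
  have hZnull : volume Zset = 0 := ae_iff.1 hZae
  -- step 1 : pointwise bound on volume (Es s)
  have step1 : ∀ s ∈ win, volume (Es s) ≤ c₁ * volume (Prod.mk s ⁻¹' A) := by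
    intro s hs
    have hsT : |s| ≤ T := by
      rw [hwin, Set.mem_Ioc] at hs
      rw [abs_le]; constructor <;> [linarith [hs.1]; linarith [hs.2]]
    have himg : Es s = (fun Y : E2 => Y + s • v Y) ''
        ((fun Y : E2 => Y + s • v Y) ⁻¹' Es s) :=
      (Set.image_preimage_eq _ (S_surj v K T hK hlip hTK hT0 s hsT)).symm
    have hsubA : ((fun Y : E2 => Y + s • v Y) ⁻¹' Es s) ⊆ (Prod.mk s ⁻¹' A) ∪ Zset := by
      intro Y hY
      by_cases hz : Y ∈ Zset
      · exact Or.inr hz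
      · left
        rw [hZset, Set.mem_setOf_eq, not_not] at hz
        exact key s hs Y hz hY
    calc volume (Es s)
        = volume ((fun Y : E2 => Y + s • v Y) ''
            ((fun Y : E2 => Y + s • v Y) ⁻¹' Es s)) := by rw [← himg]
      _ ≤ c₁ * volume ((fun Y : E2 => Y + s • v Y) ⁻¹' Es s) := by
          rw [hc₁def]
          exact lip_image_le (fun Y : E2 => Y + s • v Y) (Real.toNNReal (1 + T*K))
            (S_lip v K T hK hlip hT0 s hsT) _
      _ ≤ c₁ * volume ((Prod.mk s ⁻¹' A) ∪ Zset) :=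
          mul_le_mul_right (measure_mono hsubA) _
      _ = c₁ * volume (Prod.mk s ⁻¹' A) := by
          congr 1
          apply le_antisymm
          · calc volume ((Prod.mk s ⁻¹' A) ∪ Zset)
                ≤ volume (Prod.mk s ⁻¹' A) + volume Zset := measure_union_le _ _
              _ = volume (Prod.mk s ⁻¹' A) := by rw [hZnull, add_zero]
          · exact measure_mono Set.subset_union_left
  -- step 2 : integrate in s and use Fubini
  have step2 : (∫⁻ s in win, volume (Es s)) ≤
      c₁ * ∫⁻ Y, (volume.restrict win) ((fun s => (s, Y)) ⁻¹' A) ∂(volume : Measure E2) := by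
    calc (∫⁻ s in win, volume (Es s))
        ≤ ∫⁻ s in win, c₁ * volume (Prod.mk s ⁻¹' A) := by
          apply lintegral_mono_ae
          filter_upwards [ae_restrict_mem (by rw [hwin]; exact measurableSet_Ioc)] with s hs
          exact step1 s hs
      _ = c₁ * ∫⁻ s in win, volume (Prod.mk s ⁻¹' A) := lintegral_const_mul' c₁ _ hc₁top
      _ = c₁ * ((volume.restrict win).prod volume A) := by
          rw [Measure.prod_apply hA]
      _ = c₁ * ∫⁻ Y, (volume.restrict win) ((fun s => (s, Y)) ⁻¹' A) ∂(volume : Measure E2) := by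
          rw [Measure.prod_apply_symm hA]
  -- step 3 : 1-d maximal inequality for each Y
  have step3 : ∀ Y : E2, (volume.restrict win) ((fun s => (s, Y)) ⁻¹' A)
      ≤ 4 * ν Y (Set.Icc (-T) T) / ENNReal.ofReal Λ := by
    intro Y
    have hsecm : MeasurableSet ((fun s => (s, Y)) ⁻¹' A) :=
      hA.preimage (measurable_id.prodMk measurable_const)
    rw [Measure.restrict_apply hsecm]
    rw [ENNReal.le_div_iff_mul_le (Or.inl hΛ0) (Or.inl ENNReal.ofReal_ne_top)]
    apply hl_one_dim (ν Y) T Λ hT0 hΛ _ ?hsub ?hex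
    case hsub => rw [hwin]; exact Set.inter_subset_right
    case hex =>
      rintro s ⟨hsA, _⟩
      obtain ⟨q, hq0, hqle, hqν⟩ := hsA
      exact ⟨(q:ℝ), hq0, hqle, hqν⟩
  -- step 4 : integrate the maximal bound
  have step4 : (∫⁻ Y, (volume.restrict win) ((fun s => (s, Y)) ⁻¹' A) ∂(volume : Measure E2))
      ≤ (4 / ENNReal.ofReal Λ) * ∫⁻ Y, ν Y (Set.Icc (-T) T) ∂(volume : Measure E2) := by
    calc (∫⁻ Y, (volume.restrict win) ((fun s => (s, Y)) ⁻¹' A) ∂(volume : Measure E2))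
        ≤ ∫⁻ Y, 4 * ν Y (Set.Icc (-T) T) / ENNReal.ofReal Λ ∂(volume : Measure E2) :=
          lintegral_mono step3
      _ = ∫⁻ Y, (4 / ENNReal.ofReal Λ) * ν Y (Set.Icc (-T) T) ∂(volume : Measure E2) := by
          apply lintegral_congr fun Y => ?_
          rw [div_eq_mul_inv, div_eq_mul_inv]
          ring
      _ = (4 / ENNReal.ofReal Λ) * ∫⁻ Y, ν Y (Set.Icc (-T) T) ∂(volume : Measure E2) :=
          lintegral_const_mul' _ _ (ENNReal.div_lt_top (by norm_num) hΛ0).ne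
  -- step 5 : Tonelli and the measure-comparison pullback
  have step5 : (∫⁻ Y, ν Y (Set.Icc (-T) T) ∂(volume : Measure E2))
      ≤ c₂ * (∫⁻ X, (‖F₀ X‖₊ : ℝ≥0∞)) * ENNReal.ofReal (2*T) := by
    have h51 : (∫⁻ Y, ν Y (Set.Icc (-T) T) ∂(volume : Measure E2))
        = ∫⁻ u in Set.Icc (-T) T, (∫⁻ Y, (‖F₀ (Y + u • v Y)‖₊ : ℝ≥0∞) ∂(volume : Measure E2)) := by
      calc (∫⁻ Y, ν Y (Set.Icc (-T) T) ∂(volume : Measure E2))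
          = ∫⁻ Y, (∫⁻ u in Set.Icc (-T) T, (‖F₀ (Y + u • v Y)‖₊ : ℝ≥0∞))
              ∂(volume : Measure E2) := by
            exact lintegral_congr fun Y => hν_apply Y _ measurableSet_Icc
        _ = _ := by
            apply lintegral_lintegral_swap
            exact hH.aemeasurable
    rw [h51]
    calc (∫⁻ u in Set.Icc (-T) T, (∫⁻ Y, (‖F₀ (Y + u • v Y)‖₊ : ℝ≥0∞) ∂(volume : Measure E2)))
        ≤ ∫⁻ _ in Set.Icc (-T) T, c₂ * (∫⁻ X, (‖F₀ X‖₊ : ℝ≥0∞)) := by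
          apply lintegral_mono_ae
          filter_upwards [ae_restrict_mem measurableSet_Icc] with u hu
          have hus : |u| ≤ T := abs_le.2 ⟨hu.1, hu.2⟩
          exact S_pullback_lintegral v K T hK hlip hTK hT0 u hus _ hF₀m.measurable.enorm
      _ = c₂ * (∫⁻ X, (‖F₀ X‖₊ : ℝ≥0∞)) * volume (Set.Icc (-T) T) := setLIntegral_const _ _
      _ = c₂ * (∫⁻ X, (‖F₀ X‖₊ : ℝ≥0∞)) * ENNReal.ofReal (2*T) := by
          rw [Real.volume_Icc]
          norm_num [two_mul]
  -- step 6 : identify the total integral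
  have step6 : (∫⁻ X, (‖F₀ X‖₊ : ℝ≥0∞)) = ENNReal.ofReal (∫ X, |F X|) := by
    have h61 : (∫⁻ X, (‖F₀ X‖₊ : ℝ≥0∞)) = ∫⁻ X, (‖F X‖₊ : ℝ≥0∞) := by
      apply lintegral_congr_ae
      filter_upwards [hFeq] with x hx
      rw [hx]
    have h62 : ENNReal.ofReal (∫ X, ‖F X‖) = ∫⁻ X, (‖F X‖₊ : ℝ≥0∞) :=
      ofReal_integral_norm_eq_lintegral_enorm hF
    have h63 : (∫ X, ‖F X‖) = ∫ X, |F X| := by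
      simp only [Real.norm_eq_abs]
    rw [h61, ← h62, h63]
  -- grand total
  set B : ℝ≥0∞ := c₁ * ((4 / ENNReal.ofReal Λ) *
      (c₂ * ENNReal.ofReal (∫ X, |F X|) * ENNReal.ofReal (2*T))) with hBdef
  have hmain : (∫⁻ s in win, volume (Es s)) ≤ B := by
    calc (∫⁻ s in win, volume (Es s))
        ≤ c₁ * ∫⁻ Y, (volume.restrict win) ((fun s => (s, Y)) ⁻¹' A)
            ∂(volume : Measure E2) := step2
      _ ≤ c₁ * ((4 / ENNReal.ofReal Λ) *
            ∫⁻ Y, ν Y (Set.Icc (-T) T) ∂(volume : Measure E2)) :=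
          mul_le_mul_right step4 _
      _ ≤ c₁ * ((4 / ENNReal.ofReal Λ) *
            (c₂ * (∫⁻ X, (‖F₀ X‖₊ : ℝ≥0∞)) * ENNReal.ofReal (2*T))) := by
          exact mul_le_mul_right (mul_le_mul_right step5 _) _
      _ = B := by rw [hBdef, step6]
  have hBtop : B ≠ ⊤ := by
    rw [hBdef]
    apply ENNReal.mul_ne_top hc₁top
    apply ENNReal.mul_ne_top (ENNReal.div_lt_top (by norm_num) hΛ0).ne
    exact ENNReal.mul_ne_top (ENNReal.mul_ne_top hc₂top ENNReal.ofReal_ne_top)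
      ENNReal.ofReal_ne_top
  -- conclusion
  have hIF : (0:ℝ) ≤ ∫ X, |F X| := integral_nonneg fun x => abs_nonneg _
  have hrhs_nonneg : 0 ≤ (4 * π ^ 2 * (1 + T * K) ^ 2 / (1 - T * K) ^ 2) * (1 / Λ) * ∫ X, |F X| := by
    apply mul_nonneg (mul_nonneg (div_nonneg (by positivity) (by positivity)) (by positivity)) hIF
  show (1 / T) * (∫ s in (-(T / 2))..(T / 2), (volume (Es s)).toReal)
      ≤ (4 * π ^ 2 * (1 + T * K) ^ 2 / (1 - T * K) ^ 2) * (1 / Λ) * ∫ X, |F X|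
  by_cases hInt : IntervalIntegrable (fun s => (volume (Es s)).toReal) volume (-(T/2)) (T/2)
  case neg =>
    rw [intervalIntegral.integral_undef hInt, mul_zero]
    exact hrhs_nonneg
  case pos =>
    have hle2 : -(T/2) ≤ T/2 := by linarith
    have hconv : (∫ s in (-(T/2))..(T/2), (volume (Es s)).toReal)
        ≤ (∫⁻ s in win, volume (Es s)).toReal := by
      rw [intervalIntegral.integral_of_le hle2]
      rw [integral_eq_lintegral_of_nonneg_ae
        (Filter.Eventually.of_forall fun s => ENNReal.toReal_nonneg)
        hInt.1.aestronglyMeasurable]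
      apply ENNReal.toReal_mono
      · exact (lt_of_le_of_lt hmain (lt_of_le_of_ne le_top hBtop)).ne
      · exact lintegral_mono fun s => ENNReal.ofReal_toReal_le
    have hBr : B.toReal = 2*(1+T*K)^2 * ((4/Λ) * (2*((1-T*K)⁻¹)^2 * (∫ X, |F X|) * (2*T))) := by
      rw [hBdef, hc₁def, hc₂def]
      simp only [ENNReal.toReal_mul, ENNReal.toReal_div, ENNReal.toReal_pow,
        ENNReal.coe_toReal, ENNReal.toReal_ofReal hIF, ENNReal.toReal_ofReal hΛ.le,
        ENNReal.toReal_ofReal (show (0:ℝ) ≤ 2*T by linarith),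
        Real.coe_toNNReal _ (show (0:ℝ) ≤ 1+T*K by nlinarith),
        Real.coe_toNNReal _ (show (0:ℝ) ≤ (1-T*K)⁻¹ by positivity),
        ENNReal.toReal_ofNat]
    calc (1 / T) * (∫ s in (-(T / 2))..(T / 2), (volume (Es s)).toReal)
        ≤ (1 / T) * B.toReal := by
          apply mul_le_mul_of_nonneg_left
            (le_trans hconv (ENNReal.toReal_mono hBtop hmain)) (by positivity)
      _ ≤ (4 * π ^ 2 * (1 + T * K) ^ 2 / (1 - T * K) ^ 2) * (1 / Λ) * ∫ X, |F X| := by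
          rw [hBr]
          have hD : 0 ≤ (1+T*K)^2/(1-T*K)^2 * (1/Λ) * ∫ X, |F X| := by
            apply mul_nonneg (mul_nonneg (div_nonneg (by positivity) (by positivity))
              (by positivity)) hIF
          have hpi : (32:ℝ) ≤ 4*π^2 := by nlinarith [Real.pi_gt_three]
          have hlhs : (1/T) * (2*(1+T*K)^2 * ((4/Λ) * (2*((1-T*K)⁻¹)^2 * (∫ X, |F X|) * (2*T))))
              = 32 * ((1+T*K)^2/(1-T*K)^2 * (1/Λ) * ∫ X, |F X|) := by
            field_simp
            ring
          have hrhseq : (4 * π ^ 2 * (1 + T * K) ^ 2 / (1 - T * K) ^ 2) * (1 / Λ) * (∫ X, |F X|)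
              = (4*π^2) * ((1+T*K)^2/(1-T*K)^2 * (1/Λ) * ∫ X, |F X|) := by
            ring
          rw [hlhs, hrhseq]
          exact mul_le_mul_of_nonneg_right hpi hD
end

section
/- Let w : ℝ² → ℝ² be a unit Lipschitz vector field with constant K and 0 < T < 1/K. Let N ⊆ ℝ² be a measurable set of Lebesgue measure zero. Then for almost every (x,y) ∈ ℝ², for every t ∈ (0, T], the set {β ∈ [−t,t] : (x,y) + β·w(x,y) ∈ N} has one-dimensional Lebesgue measure zero. -/
open MeasureTheory

theorem zygmund_null_set_along_segments
    (w : EuclideanSpace ℝ (Fin 2) → EuclideanSpace ℝ (Fin 2)) (K T : ℝ)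
    (hK : 0 < K) (hlip : ∀ X Y, ‖w X - w Y‖ ≤ K * ‖X - Y‖)
    (hunit : ∀ X, ‖w X‖ = 1) (hT0 : 0 < T) (hT : T < 1 / K)
    (N : Set (EuclideanSpace ℝ (Fin 2))) (hN : MeasurableSet N)
    (hN0 : volume N = 0) :
    ∀ᵐ X ∂(volume : Measure (EuclideanSpace ℝ (Fin 2))),
      ∀ t ∈ Set.Ioc (0 : ℝ) T,
        volume {β ∈ Set.Icc (-t) t | X + β • w X ∈ N} = 0 := by
  have hTK : T * K < 1 := by
    rw [lt_div_iff₀ hK] at hT; linarith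
  have h1 : (0:ℝ) < 1 - T * K := by linarith
  -- w is continuous
  have hw : Continuous w := by
    have : LipschitzWith ⟨K, hK.le⟩ w := by
      apply LipschitzWith.of_dist_le_mul
      intro x y
      rw [dist_eq_norm, dist_eq_norm]
      exact_mod_cast hlip x y
    exact this.continuous
  -- Hausdorff measure μH[2] is a Haar measure on E
  have hfin : Module.finrank ℝ (EuclideanSpace ℝ (Fin 2)) = 2 := finrank_euclideanSpace_fin
  haveI inst : Measure.IsAddHaarMeasure (μH[(2:ℝ)] : Measure (EuclideanSpace ℝ (Fin 2))) := by
    have := MeasureTheory.isAddHaarMeasure_hausdorffMeasure (E := EuclideanSpace ℝ (Fin 2))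
    rw [hfin] at this
    exact_mod_cast this
    -- note: cast from ℕ
  -- comparison of volume and μH[2]
  have e1 : (volume : Measure (EuclideanSpace ℝ (Fin 2))) =
      Measure.addHaarScalarFactor (volume : Measure (EuclideanSpace ℝ (Fin 2))) (μH[(2:ℝ)] : Measure (EuclideanSpace ℝ (Fin 2))) •
        (μH[(2:ℝ)] : Measure (EuclideanSpace ℝ (Fin 2))) :=
    Measure.isAddLeftInvariant_eq_smul _ _
  have e2 : (μH[(2:ℝ)] : Measure (EuclideanSpace ℝ (Fin 2))) =
      Measure.addHaarScalarFactor (μH[(2:ℝ)] : Measure (EuclideanSpace ℝ (Fin 2))) (volume : Measure (EuclideanSpace ℝ (Fin 2))) •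
        (volume : Measure (EuclideanSpace ℝ (Fin 2))) :=
    Measure.isAddLeftInvariant_eq_smul _ _
  have hHN : (μH[(2:ℝ)] : Measure (EuclideanSpace ℝ (Fin 2))) N = 0 := by
    rw [e2]; simp [hN0]
  -- key: for each β with |β| ≤ T, the preimage of N under X ↦ X + β • w X is null
  have key : ∀ β : ℝ, β ∈ Set.Icc (-T) T →
      volume ((fun X : (EuclideanSpace ℝ (Fin 2)) => X + β • w X) ⁻¹' N) = 0 := by
    intro β hβ
    have hβT : |β| ≤ T := abs_le.2 ⟨hβ.1, hβ.2⟩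
    have hβ0 : 0 ≤ |β| := abs_nonneg β
    set S := fun X : (EuclideanSpace ℝ (Fin 2)) => X + β • w X with hS
    have hanti : AntilipschitzWith ⟨(1 - T * K)⁻¹, by positivity⟩ S := by
      apply AntilipschitzWith.of_le_mul_dist
      intro X Y
      show dist X Y ≤ (1 - T * K)⁻¹ * dist (S X) (S Y)
      rw [dist_eq_norm, dist_eq_norm]
      have hdiff : S X - S Y = (X - Y) + β • (w X - w Y) := by
        simp only [hS, smul_sub]
        abel
      have hXY : (0:ℝ) ≤ ‖X - Y‖ := norm_nonneg _
      have h2 : ‖X - Y‖ - T * K * ‖X - Y‖ ≤ ‖S X - S Y‖ := by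
        have h3 : ‖β • (w X - w Y)‖ ≤ T * K * ‖X - Y‖ := by
          rw [norm_smul, Real.norm_eq_abs]
          calc |β| * ‖w X - w Y‖ ≤ T * (K * ‖X - Y‖) := by
                apply mul_le_mul hβT (hlip X Y) (norm_nonneg _) hT0.le
            _ = T * K * ‖X - Y‖ := by ring
        calc ‖X - Y‖ - T * K * ‖X - Y‖
            ≤ ‖X - Y‖ - ‖β • (w X - w Y)‖ := by linarith
          _ ≤ ‖(X - Y) + β • (w X - w Y)‖ := by
              have h4 := norm_sub_le (X - Y + β • (w X - w Y)) (β • (w X - w Y))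
              rw [add_sub_cancel_right] at h4
              linarith
          _ = ‖S X - S Y‖ := by rw [hdiff]
      rw [inv_mul_eq_div, le_div_iff₀ h1]
      nlinarith [norm_nonneg (S X - S Y)]
    have hHpre := hanti.hausdorffMeasure_preimage_le (by norm_num : (0:ℝ) ≤ 2) N
    have hHpre0 : (μH[(2:ℝ)] : Measure (EuclideanSpace ℝ (Fin 2))) (S ⁻¹' N) = 0 := by
      rw [hHN, mul_zero] at hHpre
      exact le_antisymm hHpre zero_le
    rw [e1]
    simp [hHpre0]
  -- the set in the product space (EuclideanSpace ℝ (Fin 2)) × ℝ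
  set A : Set (EuclideanSpace ℝ (Fin 2) × ℝ) := {p | p.2 ∈ Set.Icc (-T) T ∧ p.1 + p.2 • w p.1 ∈ N} with hA
  have hcont : Continuous fun p : (EuclideanSpace ℝ (Fin 2)) × ℝ => p.1 + p.2 • w p.1 :=
    continuous_fst.add (continuous_snd.smul (hw.comp continuous_fst))
  have hAm : MeasurableSet A := by
    have : A = {p : (EuclideanSpace ℝ (Fin 2)) × ℝ | p.2 ∈ Set.Icc (-T) T} ∩
        ((fun p : (EuclideanSpace ℝ (Fin 2)) × ℝ => p.1 + p.2 • w p.1) ⁻¹' N) := by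
      ext p; simp [hA, Set.mem_setOf_eq, and_comm]
    rw [this]
    exact (measurable_snd measurableSet_Icc).inter (hcont.measurable hN)
  -- the swapped set
  set A₂ : Set (ℝ × EuclideanSpace ℝ (Fin 2)) := {p | p.1 ∈ Set.Icc (-T) T ∧ p.2 + p.1 • w p.2 ∈ N} with hA₂
  have hA₂m : MeasurableSet A₂ := by
    have hcont2 : Continuous fun p : ℝ × (EuclideanSpace ℝ (Fin 2)) => p.2 + p.1 • w p.2 :=
      continuous_snd.add (continuous_fst.smul (hw.comp continuous_snd))
    have : A₂ = {p : ℝ × (EuclideanSpace ℝ (Fin 2)) | p.1 ∈ Set.Icc (-T) T} ∩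
        ((fun p : ℝ × (EuclideanSpace ℝ (Fin 2)) => p.2 + p.1 • w p.2) ⁻¹' N) := by
      ext p; simp [hA₂, Set.mem_setOf_eq]
    rw [this]
    exact (measurable_fst measurableSet_Icc).inter (hcont2.measurable hN)
  -- A₂ is null by Fubini in the β-direction
  have hA₂0 : ((volume : Measure ℝ).prod (volume : Measure (EuclideanSpace ℝ (Fin 2)))) A₂ = 0 := by
    rw [Measure.measure_prod_null hA₂m]
    filter_upwards with β
    by_cases hβ : β ∈ Set.Icc (-T) T
    · have hsub : Prod.mk β ⁻¹' A₂ ⊆ (fun X : (EuclideanSpace ℝ (Fin 2)) => X + β • w X) ⁻¹' N := by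
        intro X hX
        exact hX.2
      exact measure_mono_null hsub (key β hβ)
    · have : Prod.mk β ⁻¹' A₂ = ∅ := by
        ext X
        simp only [hA₂, Set.mem_preimage, Set.mem_setOf_eq, Set.mem_empty_iff_false, iff_false]
        rintro ⟨h, -⟩
        exact hβ h
      simp [this]
  -- transfer to A by swapping
  have hA0 : ((volume : Measure (EuclideanSpace ℝ (Fin 2))).prod (volume : Measure ℝ)) A = 0 := by
    have hpre : Prod.swap ⁻¹' A = A₂ := by
      ext p; simp [hA, hA₂, Prod.swap]
    rw [← Measure.prod_swap, Measure.map_apply measurable_swap hAm, hpre]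
    exact hA₂0
  -- conclude by Fubini in the X-direction
  have hslice := (Measure.measure_prod_null hAm).1 hA0
  filter_upwards [hslice] with X hX t ht
  have hsub : {β ∈ Set.Icc (-t) t | X + β • w X ∈ N} ⊆ Prod.mk X ⁻¹' A := by
    intro β hβ
    refine ⟨Set.Icc_subset_Icc (neg_le_neg ht.2) ht.2 hβ.1, hβ.2⟩
  exact measure_mono_null hsub hX
end

section
/- Let v : ℝ² → ℝ² be a unit Lipschitz vector field with constant K and 0 < T < 1/K. For s ∈ [−T/2, T/2] and X, β with |β| ≤ T/2, the points X + β·v(S_{s_1}^{−1}(X)) and X + β·v(S_{s_2}^{−1}(X)) satisfy ‖(X + βv(S_{s_1}^{−1}X)) − (X + βv(S_{s_2}^{−1}X))‖ ≤ ((KT/2)/(1 − TK/2))·|s_1 − s_2| for all X ∈ ℝ² and all s_1, s_2 ∈ [−T/2, T/2]. -/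
theorem zygmund_uniform_s_estimate
    (v : EuclideanSpace ℝ (Fin 2) → EuclideanSpace ℝ (Fin 2)) (K T : ℝ)
    (hK : 0 < K) (hlip : ∀ X Y, ‖v X - v Y‖ ≤ K * ‖X - Y‖)
    (hunit : ∀ X, ‖v X‖ = 1) (hT0 : 0 < T) (hT : T < 1 / K)
    (β : ℝ) (hβ : |β| ≤ T / 2) :
    ∀ (X : EuclideanSpace ℝ (Fin 2)),
      ∀ s₁ ∈ Set.Icc (-(T / 2)) (T / 2), ∀ s₂ ∈ Set.Icc (-(T / 2)) (T / 2),
        ‖(X + β • v (Function.invFun (fun Y => Y + s₁ • v Y) X)) -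
            (X + β • v (Function.invFun (fun Y => Y + s₂ • v Y) X))‖
          ≤ ((K * T / 2) / (1 - T * K / 2)) * |s₁ - s₂| := by
  have hTK : T * K < 1 := by
    rw [lt_div_iff₀ hK] at hT; linarith
  have hden : 0 < 1 - T * K / 2 := by nlinarith
  -- surjectivity of S_s
  have hsurj : ∀ s : ℝ, |s| ≤ T / 2 → ∀ X : EuclideanSpace ℝ (Fin 2),
      ∃ Z, Z + s • v Z = X := by
    intro s hs X
    have hc1 : Real.toNNReal (T * K / 2) < 1 := by
      rw [← NNReal.coe_lt_coe, Real.coe_toNNReal _ (by positivity)]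
      push_cast; nlinarith
    have hlipg : LipschitzWith (Real.toNNReal (T * K / 2)) (fun Z => X - s • v Z) := by
      apply LipschitzWith.of_dist_le_mul
      intro a b
      simp only [dist_eq_norm, Real.coe_toNNReal _ (show (0:ℝ) ≤ T * K / 2 by positivity)]
      have h1 : (X - s • v a) - (X - s • v b) = s • (v b - v a) := by
        module
      rw [h1, norm_smul]
      have h2 : ‖v b - v a‖ ≤ K * ‖b - a‖ := hlip b a
      have h3 : ‖b - a‖ = ‖a - b‖ := norm_sub_rev _ _
      have habs := abs_nonneg s
      calc ‖s‖ * ‖v b - v a‖ ≤ |s| * (K * ‖a - b‖) := by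
            rw [Real.norm_eq_abs]
            exact mul_le_mul_of_nonneg_left (h3 ▸ h2) habs
        _ ≤ (T / 2) * (K * ‖a - b‖) := by
            apply mul_le_mul_of_nonneg_right hs (by positivity)
        _ = T * K / 2 * ‖a - b‖ := by ring
    have hcon : ContractingWith (Real.toNNReal (T * K / 2)) (fun Z => X - s • v Z) :=
      ⟨hc1, hlipg⟩
    obtain ⟨Z, hZ⟩ := hcon.exists_fixedPoint X (edist_ne_top _ _)
    refine ⟨Z, ?_⟩
    have h1 : X - s • v Z = Z := hZ.1
    linear_combination (norm := module) -h1
  intro X s₁ hs₁ s₂ hs₂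
  have habs₁ : |s₁| ≤ T / 2 := abs_le.2 ⟨by linarith [hs₁.1], hs₁.2⟩
  have habs₂ : |s₂| ≤ T / 2 := abs_le.2 ⟨by linarith [hs₂.1], hs₂.2⟩
  obtain ⟨W₁, hW₁⟩ := hsurj s₁ habs₁ X
  obtain ⟨W₂, hW₂⟩ := hsurj s₂ habs₂ X
  set Z₁ := Function.invFun (fun Y => Y + s₁ • v Y) X with hZ₁def
  set Z₂ := Function.invFun (fun Y => Y + s₂ • v Y) X with hZ₂def
  have hZ₁ : Z₁ + s₁ • v Z₁ = X := by
    have := Function.invFun_eq (f := fun Y => Y + s₁ • v Y) ⟨W₁, hW₁⟩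
    simpa using this
  have hZ₂ : Z₂ + s₂ • v Z₂ = X := by
    have := Function.invFun_eq (f := fun Y => Y + s₂ • v Y) ⟨W₂, hW₂⟩
    simpa using this
  have h : Z₁ + s₁ • v Z₁ = Z₂ + s₂ • v Z₂ := by rw [hZ₁, hZ₂]
  have key : Z₁ - Z₂ = (s₂ - s₁) • v Z₂ + s₁ • (v Z₂ - v Z₁) := by
    linear_combination (norm := module) h
  have hnorm : ‖Z₁ - Z₂‖ ≤ |s₁ - s₂| + T / 2 * (K * ‖Z₁ - Z₂‖) := by
    calc ‖Z₁ - Z₂‖ = ‖(s₂ - s₁) • v Z₂ + s₁ • (v Z₂ - v Z₁)‖ := by rw [key]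
      _ ≤ ‖(s₂ - s₁) • v Z₂‖ + ‖s₁ • (v Z₂ - v Z₁)‖ := norm_add_le _ _
      _ = |s₂ - s₁| * 1 + |s₁| * ‖v Z₂ - v Z₁‖ := by
          rw [norm_smul, norm_smul, hunit, Real.norm_eq_abs, Real.norm_eq_abs]
      _ ≤ |s₁ - s₂| + T / 2 * (K * ‖Z₁ - Z₂‖) := by
          rw [abs_sub_comm s₂ s₁, mul_one]
          have h2 : ‖v Z₂ - v Z₁‖ ≤ K * ‖Z₁ - Z₂‖ := by
            rw [← norm_sub_rev Z₂ Z₁]; exact hlip Z₂ Z₁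
          have : |s₁| * ‖v Z₂ - v Z₁‖ ≤ T / 2 * (K * ‖Z₁ - Z₂‖) := by
            apply mul_le_mul habs₁ h2 (norm_nonneg _) (by positivity)
          linarith
  have hZbound : (1 - T * K / 2) * ‖Z₁ - Z₂‖ ≤ |s₁ - s₂| := by nlinarith
  have hsimp : (X + β • v Z₁) - (X + β • v Z₂) = β • (v Z₁ - v Z₂) := by module
  rw [hsimp, norm_smul, Real.norm_eq_abs]
  rw [div_mul_eq_mul_div, le_div_iff₀ hden]
  have h2 : ‖v Z₁ - v Z₂‖ ≤ K * ‖Z₁ - Z₂‖ := hlip Z₁ Z₂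
  have hb0 : 0 ≤ |β| := abs_nonneg β
  have h3 : |β| * ‖v Z₁ - v Z₂‖ ≤ T / 2 * (K * ‖Z₁ - Z₂‖) :=
    mul_le_mul hβ h2 (norm_nonneg _) (by positivity)
  have h4 : |β| * ‖v Z₁ - v Z₂‖ * (1 - T * K / 2) ≤ T / 2 * (K * ‖Z₁ - Z₂‖) * (1 - T * K / 2) :=
    mul_le_mul_of_nonneg_right h3 hden.le
  have h5 : K * T / 2 * ((1 - T * K / 2) * ‖Z₁ - Z₂‖) ≤ K * T / 2 * |s₁ - s₂| :=
    mul_le_mul_of_nonneg_left hZbound (by positivity)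
  nlinarith [h4, h5]
end
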